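/- arXiv:1709.05539 — 5 statements merged into one kernel-verified Lean document; each statement's English description precedes it below -/
import Mathlib

section
/- Let G be a homocyclic finite abelian group of exponent m ∈ {2, 3, 4} and rank n (that is, G ≅ C_m^n). Let S ⊆ G be a generating subset, let A ⊆ G be non-empty, and let γ ∈ (0,1] be real. If ∂_S(A) ≤ (1-γ)·n·|A|, then |A| ≥ |G|^γ. -/
/-- The edge boundary of `A` with respect to `S`:
`∂_S(A) = |{(a,s) ∈ A × S : a + s ∉ A}|`. -/
def edgeBoundary {G : Type*} [AddCommGroup G] [DecidableEq G] (A S : Finset G) : ℕ :=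
  ((A ×ˢ S).filter (fun p => p.1 + p.2 ∉ A)).card

open Real Finset

set_option linter.unusedSectionVars false
set_option linter.unusedVariables false
set_option linter.unnecessarySeqFocus false
set_option linter.unreachableTactic false
set_option linter.unusedTactic false

lemma exp_tangent (x0 x : ℝ) : Real.exp x0 * (1 + (x - x0)) ≤ Real.exp x := by
  have h := Real.add_one_le_exp (x - x0)
  have hp := Real.exp_pos x0
  calc Real.exp x0 * (1 + (x - x0)) ≤ Real.exp x0 * Real.exp (x - x0) := by nlinarith
    _ = Real.exp x := by rw [← Real.exp_add]; ring_nf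

lemma log_four : Real.log 4 = 2 * Real.log 2 := by
  rw [show (4:ℝ) = 2^(2:ℕ) by norm_num, Real.log_pow]; push_cast; ring

lemma exp_neg_log_two : Real.exp (-(Real.log 2)) = 1/2 := by
  rw [Real.exp_neg, Real.exp_log (by norm_num : (0:ℝ) < 2)]; norm_num

lemma exp_neg_two_log_two : Real.exp (-(2*Real.log 2)) = 1/4 := by
  rw [show -(2*Real.log 2) = -(Real.log 4) by rw [log_four], Real.exp_neg,
    Real.exp_log (by norm_num : (0:ℝ) < 4)]; norm_num

lemma exp_neg_half_log_two : (0.7071:ℝ) ≤ Real.exp (-(Real.log 2)/2) := by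
  set y := Real.exp (-(Real.log 2)/2) with hy
  have hsq : y^2 = 1/2 := by
    rw [hy, ← Real.exp_nat_mul]; norm_num
    rw [show (2:ℝ) * (-(Real.log 2)/2) = -(Real.log 2) by ring, exp_neg_log_two]
  by_contra h
  push_neg at h
  have h0 : 0 ≤ y := (Real.exp_pos _).le
  nlinarith

lemma exp_neg_log_three : Real.exp (-(Real.log 3)) = 1/3 := by
  rw [Real.exp_neg, Real.exp_log (by norm_num : (0:ℝ) < 3)]; norm_num

lemma exp_neg_half_log_three : (0.5773:ℝ) ≤ Real.exp (-(Real.log 3)/2) := by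
  set y := Real.exp (-(Real.log 3)/2) with hy
  have hsq : y^2 = 1/3 := by
    rw [hy, ← Real.exp_nat_mul]; norm_num
    rw [show (2:ℝ) * (-(Real.log 3)/2) = -(Real.log 3) by ring, exp_neg_log_three]
  by_contra h
  push_neg at h
  have h0 : 0 ≤ y := (Real.exp_pos _).le
  nlinarith

lemma log_three_half_lb : (0.4:ℝ) ≤ Real.log (3/2) := by
  rw [show (0.4:ℝ) = (2:ℝ)/5 by norm_num, Real.le_log_iff_exp_le (by norm_num : (0:ℝ) < 3/2)]
  have h5 : Real.exp ((2:ℝ)/5) ^ (5:ℕ) = Real.exp 1 ^ (2:ℕ) := by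
    rw [← Real.exp_nat_mul, ← Real.exp_nat_mul]; norm_num
  have he := Real.exp_one_lt_d9
  have hp : Real.exp 1 ^ (2:ℕ) ≤ 2.7182818286^(2:ℕ) := by
    apply pow_le_pow_left₀ (Real.exp_pos 1).le he.le
  have : Real.exp ((2:ℝ)/5) ^ (5:ℕ) ≤ (3/2:ℝ)^(5:ℕ) := by
    rw [h5]; nlinarith
  exact le_of_pow_le_pow_left₀ (by norm_num) (by norm_num) this

lemma log_three_half_ub : Real.log (3/2) ≤ (0.42:ℝ) := by
  rw [show (0.42:ℝ) = (21:ℝ)/50 by norm_num, Real.log_le_iff_le_exp (by norm_num : (0:ℝ) < 3/2)]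
  have h50 : Real.exp ((21:ℝ)/50) ^ (50:ℕ) = Real.exp 1 ^ (21:ℕ) := by
    rw [← Real.exp_nat_mul, ← Real.exp_nat_mul]; norm_num
  have he := Real.exp_one_gt_d9
  have hp : (2.7182818283:ℝ)^(21:ℕ) ≤ Real.exp 1 ^ (21:ℕ) := by
    apply pow_le_pow_left₀ (by norm_num) he.le
  have key : (3/2:ℝ)^(50:ℕ) ≤ (2.7182818283:ℝ)^(21:ℕ) := by norm_num
  have : (3/2:ℝ)^(50:ℕ) ≤ Real.exp ((21:ℝ)/50) ^ (50:ℕ) := by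
    rw [h50]; exact le_trans key hp
  exact le_of_pow_le_pow_left₀ (by norm_num) (Real.exp_pos _).le this

lemma log_three_eq : Real.log 3 = Real.log 2 + Real.log (3/2) := by
  have h := Real.log_div (show (3:ℝ) ≠ 0 by norm_num) (show (2:ℝ) ≠ 0 by norm_num)
  linarith

lemma log_three_lb : (1.0931:ℝ) ≤ Real.log 3 := by
  have := log_three_half_lb; have := Real.log_two_gt_d9; rw [log_three_eq]; linarith

lemma log_three_ub : Real.log 3 ≤ (1.1132:ℝ) := by
  have := log_three_half_ub; have := Real.log_two_lt_d9; rw [log_three_eq]; linarith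

lemma oneD_L1 {d : ℝ} (h0 : 0 ≤ d) (h1 : d ≤ 1/4) :
    (1-3*d)^2 + 3*d^2 ≤ Real.exp ((-8*d) * Real.log 2) := by
  have l2a := Real.log_two_gt_d9; have l2b := Real.log_two_lt_d9
  rcases le_or_gt d (1/30) with hc | hc
  · have t := exp_tangent 0 ((-8*d) * Real.log 2)
    rw [Real.exp_zero] at t
    nlinarith
  rcases le_or_gt d (1/10) with hc2 | hc2
  · have t := exp_tangent (-(Real.log 2)/2) ((-8*d) * Real.log 2)
    have hr := exp_neg_half_log_two
    have hfac : (0:ℝ) ≤ 1 + ((-8*d) * Real.log 2 - (-(Real.log 2)/2)) := by nlinarith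
    have t2 : (0.7071:ℝ) * (1 + ((-8*d) * Real.log 2 - (-(Real.log 2)/2))) ≤
        Real.exp ((-8*d) * Real.log 2) :=
      le_trans (mul_le_mul_of_nonneg_right hr hfac) t
    nlinarith
  rcases le_or_gt d (0.1834) with hc3 | hc3
  · have t := exp_tangent (-(Real.log 2)) ((-8*d) * Real.log 2)
    rw [exp_neg_log_two] at t
    nlinarith
  · have t := exp_tangent (-(2*Real.log 2)) ((-8*d) * Real.log 2)
    rw [exp_neg_two_log_two] at t
    nlinarith

lemma oneD_L2 {a d : ℝ} (h0 : 0 ≤ d) (hda : d ≤ a) (hs : 2*a+2*d = 1) :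
    2*a^2+2*d^2 ≤ Real.exp ((4*a-3) * Real.log 2) := by
  have l2a := Real.log_two_gt_d9; have l2b := Real.log_two_lt_d9
  rcases le_or_gt a 0.37 with hc | hc
  · have t := exp_tangent (-(2*Real.log 2)) ((4*a-3) * Real.log 2)
    rw [exp_neg_two_log_two] at t
    nlinarith
  · have t := exp_tangent (-(Real.log 2)) ((4*a-3) * Real.log 2)
    rw [exp_neg_log_two] at t
    nlinarith

lemma oneD_L3 {a d : ℝ} (h0 : 0 ≤ d) (hda : d ≤ a) (hs : 3*a+d = 1) :
    3*a^2+d^2 ≤ Real.exp ((8*a-4) * Real.log 2) := by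
  have l2a := Real.log_two_gt_d9; have l2b := Real.log_two_lt_d9
  have t := exp_tangent (-(2*Real.log 2)) ((8*a-4) * Real.log 2)
  rw [exp_neg_two_log_two] at t
  nlinarith

lemma oneD_L4 {a b : ℝ} (h0 : 0 ≤ b) (hba : b ≤ a) (hs : a+b = 1) :
    a^2+b^2 ≤ Real.exp ((2*a-2) * Real.log 2) := by
  have l2a := Real.log_two_gt_d9; have l2b := Real.log_two_lt_d9
  rcases le_or_gt a 0.8 with hc | hc
  · have t := exp_tangent (-(Real.log 2)) ((2*a-2) * Real.log 2)
    rw [exp_neg_log_two] at t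
    nlinarith
  · have t := exp_tangent 0 ((2*a-2) * Real.log 2)
    rw [Real.exp_zero] at t
    nlinarith

lemma oneD_L5 {a z : ℝ} (h0 : 0 ≤ z) (hza : z ≤ a) (hs : 2*a+z = 1) :
    2*a^2+z^2 ≤ Real.exp ((2*a-2) * Real.log 2) := by
  have l2a := Real.log_two_gt_d9; have l2b := Real.log_two_lt_d9
  have t := exp_tangent (-(Real.log 2)) ((2*a-2) * Real.log 2)
  rw [exp_neg_log_two] at t
  nlinarith

lemma oneD_M31 {a c : ℝ} (h0 : 0 ≤ c) (hca : c ≤ a) (hs : a+2*c = 1) :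
    a^2+2*c^2 ≤ Real.exp ((-3*c) * Real.log 3) := by
  have l3a := log_three_lb; have l3b := log_three_ub
  rcases le_or_gt c 0.08 with hc | hc
  · have t := exp_tangent 0 ((-3*c) * Real.log 3)
    rw [Real.exp_zero] at t
    nlinarith
  rcases le_or_gt c 0.25 with hc2 | hc2
  · have t := exp_tangent (-(Real.log 3)/2) ((-3*c) * Real.log 3)
    have hr := exp_neg_half_log_three
    have hfac : (0:ℝ) ≤ 1 + ((-3*c) * Real.log 3 - (-(Real.log 3)/2)) := by nlinarith
    have t2 : (0.5773:ℝ) * (1 + ((-3*c) * Real.log 3 - (-(Real.log 3)/2))) ≤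
        Real.exp ((-3*c) * Real.log 3) :=
      le_trans (mul_le_mul_of_nonneg_right hr hfac) t
    nlinarith
  · have t := exp_tangent (-(Real.log 3)) ((-3*c) * Real.log 3)
    rw [exp_neg_log_three] at t
    nlinarith

lemma oneD_M32 {a c : ℝ} (h0 : 0 ≤ c) (hca : c ≤ a) (hs : 2*a+c = 1) :
    2*a^2+c^2 ≤ Real.exp ((3*a-2) * Real.log 3) := by
  have l3a := log_three_lb; have l3b := log_three_ub
  have t := exp_tangent (-(Real.log 3)) ((3*a-2) * Real.log 3)
  rw [exp_neg_log_three] at t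
  nlinarith

lemma oneD_M33 {a b : ℝ} (h0 : 0 ≤ b) (hba : b ≤ a) (hs : a+b = 1) :
    a^2+b^2 ≤ Real.exp ((a-1) * Real.log 3) := by
  have l3a := log_three_lb; have l3b := log_three_ub
  rcases le_or_gt a 0.7 with hc | hc
  · have t := exp_tangent (-(Real.log 3)/2) ((a-1) * Real.log 3)
    have hr := exp_neg_half_log_three
    have hfac : (0:ℝ) ≤ 1 + ((a-1) * Real.log 3 - (-(Real.log 3)/2)) := by nlinarith
    have t2 : (0.5773:ℝ) * (1 + ((a-1) * Real.log 3 - (-(Real.log 3)/2))) ≤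
        Real.exp ((a-1) * Real.log 3) :=
      le_trans (mul_le_mul_of_nonneg_right hr hfac) t
    nlinarith
  · have t := exp_tangent 0 ((a-1) * Real.log 3)
    rw [Real.exp_zero] at t
    nlinarith

lemma Qlem2 {a b : ℝ} (h0 : 0 ≤ b) (hba : b ≤ a) (hs : a+b = 1) :
    a^2+b^2 ≤ Real.exp ((a-b-1)*Real.log 2) := by
  have h := oneD_L4 h0 hba hs
  have he : (a-b-1)*Real.log 2 = (2*a-2)*Real.log 2 := by
    linear_combination (-(Real.log 2))*hs
  rw [he]; exact h

lemma Qlem3 {a b c : ℝ} (h0 : 0 ≤ c) (hcb : c ≤ b) (hba : b ≤ a) (hs : a+b+c = 1) :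
    a^2+b^2+c^2 ≤ Real.exp ((a-c-1)*Real.log 3) := by
  set K := Real.log 3 with hK
  -- endpoint t⁺ : config (a1, c1, c1)
  have hq1 : ((3*a+b-c)/3)^2 + 2*((b+2*c)/3)^2 ≤ Real.exp ((a-c-1)*K) := by
    have h := oneD_M31 (a := (3*a+b-c)/3) (c := (b+2*c)/3)
      (by linarith) (by linarith) (by linarith)
    have he : (-3*((b+2*c)/3))*K = (a-c-1)*K := by linear_combination (-K)*hs
    rw [← he]; exact h
  rcases eq_or_lt_of_le (le_trans hcb hba) with heq | hac
  · -- degenerate: a = b = c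
    have hba' : b = a := le_antisymm hba (heq ▸ hcb)
    have hca' : c = a := heq
    nlinarith [hq1]
  rcases le_or_gt a (b + 3*c) with hcase | hcase
  · -- t⁻ = (b-a)/3 : config (a0, a0, c0), M32
    have hq0 : 2*((2*a+b)/3)^2 + ((b+3*c-a)/3 + c - c)^2 ≤ Real.exp ((a-c-1)*K) := by
      have h := oneD_M32 (a := (2*a+b)/3) (c := (a+b+3*c - a - b)/3 + (b-a)/3 + c - c)
        (by linarith) (by linarith) (by linarith)
      have he : (3*((2*a+b)/3)-2)*K = (a-c-1)*K := by linear_combination K*hs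
      rw [← he]; convert h using 3 <;> ring
    -- convex combination
    nlinarith [hq1, hq0, mul_nonneg (show (0:ℝ) ≤ b - c by linarith)
        (sub_nonneg.2 hq0),
      mul_nonneg (show (0:ℝ) ≤ a - b by linarith) (sub_nonneg.2 hq1),
      mul_nonneg (mul_nonneg (show (0:ℝ) ≤ a - b by linarith)
        (show (0:ℝ) ≤ b - c by linarith)) (show (0:ℝ) ≤ a - c by linarith)]
  · -- t⁻ = -c : config (a-c, b+2c, 0), M33
    have hq0 : (a-c)^2 + (b+2*c)^2 ≤ Real.exp ((a-c-1)*K) := by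
      have h := oneD_M33 (a := a-c) (b := b+2*c)
        (by linarith) (by linarith) (by linarith)
      have he : ((a-c)-1)*K = (a-c-1)*K := by ring_nf
      rw [← he]; exact h
    nlinarith [hq1, hq0, mul_nonneg (show (0:ℝ) ≤ b - c by linarith)
        (sub_nonneg.2 hq0),
      mul_nonneg (show (0:ℝ) ≤ 3*c by linarith) (sub_nonneg.2 hq1),
      mul_nonneg (mul_nonneg (show (0:ℝ) ≤ c by linarith)
        (show (0:ℝ) ≤ b - c by linarith)) (show (0:ℝ) ≤ b + 2*c by linarith)]

lemma Qlem4B {a z d : ℝ} (h0 : 0 ≤ d) (hda : d ≤ a) (hdz : d ≤ z) (hza : z ≤ a)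
    (hs : 2*a+z+d = 1) : 2*a^2+z^2+d^2 ≤ Real.exp ((a-d-1)*(2*Real.log 2)) := by
  set L := Real.log 2 with hL
  have hq1 : 2*((4*a+z-d)/4)^2 + 2*((z+3*d)/4)^2 ≤ Real.exp ((a-d-1)*(2*L)) := by
    have h := oneD_L2 (a := (4*a+z-d)/4) (d := (z+3*d)/4)
      (by linarith) (by linarith) (by linarith)
    have he : (4*((4*a+z-d)/4)-3)*L = (a-d-1)*(2*L) := by linear_combination L*hs
    rw [← he]; exact h
  rcases eq_or_lt_of_le hda with heq | had
  · have hz : z = a := le_antisymm hza (heq ▸ hdz)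
    nlinarith [hq1]
  rcases le_or_gt a (z + 4*d) with hcase | hcase
  · have hq0 : 3*((3*a+z)/4)^2 + ((4*d+z-a)/4)^2 ≤ Real.exp ((a-d-1)*(2*L)) := by
      have h := oneD_L3 (a := (3*a+z)/4) (d := (4*d+z-a)/4)
        (by linarith) (by linarith) (by linarith)
      have he : (8*((3*a+z)/4)-4)*L = (a-d-1)*(2*L) := by linear_combination (2*L)*hs
      rw [← he]; exact h
    nlinarith [hq1, hq0,
      mul_nonneg (show (0:ℝ) ≤ z - d by linarith) (sub_nonneg.2 hq0),
      mul_nonneg (show (0:ℝ) ≤ a - z by linarith) (sub_nonneg.2 hq1),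
      mul_nonneg (mul_nonneg (show (0:ℝ) ≤ a - z by linarith)
        (show (0:ℝ) ≤ z - d by linarith)) (show (0:ℝ) ≤ a - d by linarith)]
  · have hq0 : 2*(a-d)^2 + (z+3*d)^2 ≤ Real.exp ((a-d-1)*(2*L)) := by
      have h := oneD_L5 (a := a-d) (z := z+3*d)
        (by linarith) (by linarith) (by linarith)
      have he : (2*(a-d)-2)*L = (a-d-1)*(2*L) := by ring
      rw [← he]; exact h
    nlinarith [hq1, hq0,
      mul_nonneg (show (0:ℝ) ≤ z - d by linarith) (sub_nonneg.2 hq0),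
      mul_nonneg (show (0:ℝ) ≤ d by linarith) (sub_nonneg.2 hq1),
      mul_nonneg (mul_nonneg (show (0:ℝ) ≤ d by linarith)
        (show (0:ℝ) ≤ z - d by linarith)) (show (0:ℝ) ≤ z + 3*d by linarith)]

lemma Qlem4A {a w d : ℝ} (h0 : 0 ≤ d) (hda : d ≤ a) (hdw : d ≤ w) (hwa : w ≤ a)
    (hs : a+w+2*d = 1) : a^2+w^2+2*d^2 ≤ Real.exp ((a-d-1)*(2*Real.log 2)) := by
  set L := Real.log 2 with hL
  have hq1 : ((4*a+w-d)/4)^2 + 3*((w+3*d)/4)^2 ≤ Real.exp ((a-d-1)*(2*L)) := by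
    have h := oneD_L1 (d := (w+3*d)/4) (by linarith) (by linarith)
    have hev : (1-3*((w+3*d)/4)) = (4*a+w-d)/4 := by linarith
    rw [hev] at h
    have he : (-8*((w+3*d)/4))*L = (a-d-1)*(2*L) := by linear_combination (-2*L)*hs
    rw [← he]; exact h
  rcases eq_or_lt_of_le hda with heq | had
  · have hw : w = a := le_antisymm hwa (heq ▸ hdw)
    nlinarith [hq1]
  rcases le_or_gt a (w + 4*d) with hcase | hcase
  · have hq0 : 2*((3*a+w)/4)^2 + 2*((4*d+w-a)/4)^2 ≤ Real.exp ((a-d-1)*(2*L)) := by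
      have h := oneD_L2 (a := (3*a+w)/4) (d := (4*d+w-a)/4)
        (by linarith) (by linarith) (by linarith)
      have he : (4*((3*a+w)/4)-3)*L = (a-d-1)*(2*L) := by linear_combination L*hs
      rw [← he]; exact h
    nlinarith [hq1, hq0,
      mul_nonneg (show (0:ℝ) ≤ w - d by linarith) (sub_nonneg.2 hq0),
      mul_nonneg (show (0:ℝ) ≤ a - w by linarith) (sub_nonneg.2 hq1),
      mul_nonneg (mul_nonneg (show (0:ℝ) ≤ a - w by linarith)
        (show (0:ℝ) ≤ w - d by linarith)) (show (0:ℝ) ≤ a - d by linarith)]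
  · have hq0 : (a-d)^2 + (w+3*d)^2 ≤ Real.exp ((a-d-1)*(2*L)) := by
      have h := oneD_L4 (a := a-d) (b := w+3*d)
        (by linarith) (by linarith) (by linarith)
      have he : (2*(a-d)-2)*L = (a-d-1)*(2*L) := by ring
      rw [← he]; exact h
    rcases eq_or_lt_of_le h0 with hd0 | hd0
    · subst hd0
      nlinarith [hq0]
    · nlinarith [hq1, hq0, show (0:ℝ) < w + 3*d by linarith,
        mul_nonneg (show (0:ℝ) ≤ w - d by linarith) (sub_nonneg.2 hq0),
        mul_nonneg (show (0:ℝ) ≤ d by linarith) (sub_nonneg.2 hq1),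
        mul_nonneg (mul_nonneg (show (0:ℝ) ≤ d by linarith)
          (show (0:ℝ) ≤ w - d by linarith)) (show (0:ℝ) ≤ w + 3*d by linarith)]

lemma Qlem4 {a b c d : ℝ} (h0 : 0 ≤ d) (hdb : d ≤ b) (hdc : d ≤ c) (hba : b ≤ a)
    (hca : c ≤ a) (hda : d ≤ a) (hs : a+b+c+d = 1) :
    a^2+b^2+c^2+d^2 ≤ Real.exp ((a-d-1)*Real.log 4) := by
  have h4 : Real.log 4 = 2 * Real.log 2 := by
    rw [show (4:ℝ) = 2^(2:ℕ) by norm_num, Real.log_pow]; push_cast; ring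
  rw [h4]
  rcases le_or_gt (a+d) (b+c) with hcase | hcase
  · have h := Qlem4B (a := a) (z := b+c-a) (d := d)
      h0 hda (by linarith) (by linarith) (by linarith)
    nlinarith [h, mul_nonneg (show (0:ℝ) ≤ a-b by linarith) (show (0:ℝ) ≤ a-c by linarith)]
  · have h := Qlem4A (a := a) (w := b+c-d) (d := d)
      h0 hda (by linarith) (by linarith) (by linarith)
    nlinarith [h, mul_nonneg (show (0:ℝ) ≤ b-d by linarith) (show (0:ℝ) ≤ c-d by linarith)]

lemma jensen_exp {ι : Type*} [Fintype ι] (p : ι → ℝ) (hp : ∀ i, 0 ≤ p i)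
    (hsum : ∑ i, p i = 1) :
    Real.exp (∑ i, p i * Real.log (p i)) ≤ ∑ i, (p i)^2 := by
  classical
  set T : Finset ι := univ.filter (fun i => 0 < p i) with hT
  have h1 : ∑ i ∈ T, p i = 1 := by
    rw [hT, Finset.sum_filter_of_ne, hsum]
    intro x _ hx
    exact lt_of_le_of_ne (hp x) (Ne.symm hx)
  have h2 : ∑ i ∈ T, p i * Real.log (p i) = ∑ i, p i * Real.log (p i) := by
    rw [hT, Finset.sum_filter_of_ne]
    intro x _ hx
    rcases eq_or_lt_of_le (hp x) with h | h
    · exact absurd (by rw [← h]; ring) hx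
    · exact h
  have h3 : ∑ i ∈ T, (p i)^2 = ∑ i, (p i)^2 := by
    rw [hT, Finset.sum_filter_of_ne]
    intro x _ hx
    rcases eq_or_lt_of_le (hp x) with h | h
    · exact absurd (by rw [← h]; ring) hx
    · exact h
  have hj := convexOn_exp.map_sum_le (t := T) (w := p) (p := fun i => Real.log (p i))
    (fun i _ => hp i) h1 (fun i _ => Set.mem_univ _)
  rw [← h2, ← h3]
  calc Real.exp (∑ i ∈ T, p i * Real.log (p i))
      = Real.exp (∑ i ∈ T, p i • Real.log (p i)) := by simp [smul_eq_mul]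
    _ ≤ ∑ i ∈ T, p i • Real.exp (Real.log (p i)) := hj
    _ = ∑ i ∈ T, (p i)^2 := by
        apply Finset.sum_congr rfl
        intro i hi
        rw [hT] at hi
        simp only [Finset.mem_filter] at hi
        rw [smul_eq_mul, Real.exp_log hi.2]
        ring

lemma sumQ_le {ι : Type*} [Fintype ι] [DecidableEq ι] (m : ℕ)
    (hm : m = 2 ∨ m = 3 ∨ m = 4) (hcard : Fintype.card ι = m)
    (p : ι → ℝ) (hp : ∀ i, 0 ≤ p i) (hsum : ∑ i, p i = 1)
    (i0 i1 : ι) (hne : i1 ≠ i0)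
    (hmax : ∀ i, p i ≤ p i0) (hmin : ∀ i, p i1 ≤ p i) :
    ∑ i, (p i)^2 ≤ Real.exp ((p i0 - p i1 - 1) * Real.log (m:ℝ)) := by
  rcases hm with hm | hm | hm <;> subst hm
  · -- m = 2
    have huniv : (univ : Finset ι) = insert i0 {i1} := by
      apply (Finset.eq_univ_of_card _ _).symm
      rw [Finset.card_insert_of_notMem (by simp [hne.symm]), Finset.card_singleton, hcard]
    have hexp : ∀ f : ι → ℝ, ∑ i, f i = f i0 + f i1 := by
      intro f
      rw [huniv, Finset.sum_insert (by simp [hne.symm]), Finset.sum_singleton]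
    rw [hexp]
    have hs : p i0 + p i1 = 1 := by rw [← hexp]; exact hsum
    have := Qlem2 (hp i1) (hmin i0) hs
    convert this using 3 <;> norm_num
  · -- m = 3
    have hex : ∃ j, j ≠ i0 ∧ j ≠ i1 := by
      have h2 : (({i0, i1} : Finset ι)).card = 2 := by
        rw [Finset.card_insert_of_notMem (by simp [hne.symm]), Finset.card_singleton]
      have : (univ \ ({i0, i1} : Finset ι)).Nonempty := by
        rw [← Finset.card_pos, Finset.card_sdiff_of_subset (Finset.subset_univ _), Finset.card_univ,
          hcard, h2]
        norm_num
      obtain ⟨j, hj⟩ := this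
      simp only [Finset.mem_sdiff, Finset.mem_insert, Finset.mem_singleton] at hj
      exact ⟨j, fun h => hj.2 (Or.inl h), fun h => hj.2 (Or.inr h)⟩
    obtain ⟨j, hj0, hj1⟩ := hex
    have huniv : (univ : Finset ι) = insert i0 (insert j {i1}) := by
      apply (Finset.eq_univ_of_card _ _).symm
      rw [Finset.card_insert_of_notMem (by simp [hj0.symm, hne.symm]),
        Finset.card_insert_of_notMem (by simp [hj1]), Finset.card_singleton, hcard]
    have hexp : ∀ f : ι → ℝ, ∑ i, f i = f i0 + f j + f i1 := by
      intro f
      rw [huniv, Finset.sum_insert (by simp [hj0.symm, hne.symm]),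
        Finset.sum_insert (by simp [hj1]), Finset.sum_singleton]
      ring
    rw [hexp]
    have hs : p i0 + p j + p i1 = 1 := by rw [← hexp]; exact hsum
    have := Qlem3 (hp i1) (hmin j) (hmax j) hs
    convert this using 3 <;> norm_num
  · -- m = 4
    have hex : ∃ j k, j ≠ k ∧ j ≠ i0 ∧ j ≠ i1 ∧ k ≠ i0 ∧ k ≠ i1 := by
      have h2 : (({i0, i1} : Finset ι)).card = 2 := by
        rw [Finset.card_insert_of_notMem (by simp [hne.symm]), Finset.card_singleton]
      have hc : (univ \ ({i0, i1} : Finset ι)).card = 2 := by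
        rw [Finset.card_sdiff_of_subset (Finset.subset_univ _), Finset.card_univ, hcard, h2]
      have : 1 < (univ \ ({i0, i1} : Finset ι)).card := by omega
      obtain ⟨j, hj, k, hk, hjk⟩ := Finset.one_lt_card.1 this
      simp only [Finset.mem_sdiff, Finset.mem_insert, Finset.mem_singleton] at hj hk
      exact ⟨j, k, hjk, fun h => hj.2 (Or.inl h), fun h => hj.2 (Or.inr h),
        fun h => hk.2 (Or.inl h), fun h => hk.2 (Or.inr h)⟩
    obtain ⟨j, k, hjk, hj0, hj1, hk0, hk1⟩ := hex
    have huniv : (univ : Finset ι) = insert i0 (insert j (insert k {i1})) := by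
      apply (Finset.eq_univ_of_card _ _).symm
      rw [Finset.card_insert_of_notMem (by simp [hj0.symm, hk0.symm, hne.symm]),
        Finset.card_insert_of_notMem (by simp [hjk, hj1]),
        Finset.card_insert_of_notMem (by simp [hk1]), Finset.card_singleton, hcard]
    have hexp : ∀ f : ι → ℝ, ∑ i, f i = f i0 + f j + f k + f i1 := by
      intro f
      rw [huniv, Finset.sum_insert (by simp [hj0.symm, hk0.symm, hne.symm]),
        Finset.sum_insert (by simp [hjk, hj1]), Finset.sum_insert (by simp [hk1]),
        Finset.sum_singleton]
      ring
    rw [hexp]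
    have hs : p i0 + p j + p k + p i1 = 1 := by rw [← hexp]; exact hsum
    have := Qlem4 (hp i1) (hmin j) (hmin k) (hmax j) (hmax k) (hmin i0) hs
    convert this using 3 <;> norm_num

lemma entropy_main {ι : Type*} [Fintype ι] [DecidableEq ι] (m : ℕ)
    (hm : m = 2 ∨ m = 3 ∨ m = 4) (hcard : Fintype.card ι = m)
    (p : ι → ℝ) (hp : ∀ i, 0 ≤ p i) (hsum : ∑ i, p i = 1)
    (i0 i1 : ι) (hmax : ∀ i, p i ≤ p i0) (hmin : ∀ i, p i1 ≤ p i) :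
    (1 - p i0 + p i1) * Real.log (m:ℝ) ≤ ∑ i, -(p i * Real.log (p i)) := by
  classical
  -- replace i1 by an index distinct from i0
  obtain ⟨i1', hne', hval, hmin'⟩ :
      ∃ i1', i1' ≠ i0 ∧ p i1' = p i1 ∧ ∀ i, p i1' ≤ p i := by
    by_cases h01 : i1 = i0
    · have hcard2 : 1 < Fintype.card ι := by omega
      obtain ⟨j, hj⟩ := Fintype.exists_ne_of_one_lt_card hcard2 i0
      have hv : p j = p i1 := le_antisymm (h01 ▸ hmax j) (hmin j)
      exact ⟨j, hj, hv, fun i => hv ▸ hmin i⟩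
    · exact ⟨i1, h01, rfl, hmin⟩
  have hQ := sumQ_le m hm hcard p hp hsum i0 i1' hne' hmax hmin'
  have hj := jensen_exp p hp hsum
  have key : ∑ i, p i * Real.log (p i) ≤ (p i0 - p i1' - 1) * Real.log (m:ℝ) :=
    Real.exp_le_exp.1 (le_trans hj hQ)
  rw [Finset.sum_neg_distrib]
  rw [← hval]
  linarith

section Comb
variable {G : Type*} [AddCommGroup G] [DecidableEq G]

lemma edgeBoundary_eq_sum (A S : Finset G) :
    edgeBoundary A S = ∑ s ∈ S, (A.filter (fun a => a + s ∉ A)).card := by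
  classical
  unfold edgeBoundary
  rw [Finset.card_eq_sum_card_fiberwise (f := Prod.snd) (t := S)
    (fun p hp => (Finset.mem_product.1 (Finset.mem_filter.1 hp).1).2)]
  apply Finset.sum_congr rfl
  intro s _
  have he : ((A ×ˢ S).filter (fun p => p.1 + p.2 ∉ A)).filter (fun p => p.2 = s)
      = (A.filter (fun a => a + s ∉ A)).image (fun a => (a, s)) := by
    ext ⟨a, t⟩
    simp only [Finset.mem_filter, Finset.mem_product, Finset.mem_image]
    constructor
    · rintro ⟨⟨⟨ha, _⟩, hna⟩, rfl⟩
      exact ⟨a, ⟨ha, hna⟩, rfl⟩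
    · rintro ⟨x, ⟨hx, hnx⟩, heq⟩
      cases heq
      exact ⟨⟨⟨hx, ‹s ∈ S›⟩, hnx⟩, rfl⟩
  rw [he, Finset.card_image_of_injective _ (fun x y h => congrArg Prod.fst h)]

lemma edgeBoundary_mono (A : Finset G) {S S' : Finset G} (h : S' ⊆ S) :
    edgeBoundary A S' ≤ edgeBoundary A S :=
  Finset.card_le_card (Finset.filter_subset_filter _
    (Finset.product_subset_product (Finset.Subset.refl A) h))

lemma edgeBoundary_image_equiv {H : Type*} [AddCommGroup H] [DecidableEq H]
    (φ : G ≃+ H) (A S : Finset G) :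
    edgeBoundary (A.image φ) (S.image φ) = edgeBoundary A S := by
  classical
  rw [edgeBoundary_eq_sum, edgeBoundary_eq_sum,
    Finset.sum_image (fun x _ y _ h => φ.injective h)]
  apply Finset.sum_congr rfl
  intro s _
  have he : (A.image φ).filter (fun h => h + φ s ∉ A.image φ)
      = (A.filter (fun a => a + s ∉ A)).image φ := by
    ext h
    simp only [Finset.mem_filter, Finset.mem_image]
    constructor
    · rintro ⟨⟨a, ha, rfl⟩, hnb⟩
      exact ⟨a, ⟨ha, fun hab => hnb ⟨a + s, hab, by rw [map_add]⟩⟩, rfl⟩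
    · rintro ⟨a, ⟨ha, hna⟩, rfl⟩
      refine ⟨⟨a, ha, rfl⟩, ?_⟩
      rintro ⟨b, hb, hfb⟩
      have hba : b = a + s := φ.injective (by rw [hfb, map_add])
      exact hna (hba ▸ hb)
  rw [he, Finset.card_image_of_injective _ φ.injective]

variable {m : ℕ} [NeZero m]

def zslice (A : Finset (ZMod m × G)) (j : ZMod m) : Finset G :=
  (A.filter (fun q => q.1 = j)).image Prod.snd

lemma mem_zslice {A : Finset (ZMod m × G)} {j : ZMod m} {x : G} :
    x ∈ zslice A j ↔ (j, x) ∈ A := by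
  simp only [zslice, Finset.mem_image, Finset.mem_filter]
  constructor
  · rintro ⟨⟨a, b⟩, ⟨hA, rfl⟩, rfl⟩
    exact hA
  · intro h
    exact ⟨(j, x), ⟨h, rfl⟩, rfl⟩

lemma card_filter_prod (A : Finset (ZMod m × G)) (P : ZMod m × G → Prop) [DecidablePred P] :
    (A.filter P).card = ∑ j : ZMod m, ((zslice A j).filter (fun x => P (j, x))).card := by
  classical
  rw [Finset.card_eq_sum_card_fiberwise (f := fun q => q.1) (t := Finset.univ)
    (fun _ _ => Finset.mem_univ _)]
  apply Finset.sum_congr rfl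
  intro j _
  have he : (A.filter P).filter (fun q => q.1 = j)
      = ((zslice A j).filter (fun x => P (j, x))).image (fun x => (j, x)) := by
    ext ⟨j', x⟩
    simp only [Finset.mem_filter, Finset.mem_image]
    constructor
    · rintro ⟨⟨hA, hP⟩, rfl⟩
      exact ⟨x, ⟨mem_zslice.2 hA, hP⟩, rfl⟩
    · rintro ⟨y, ⟨hy, hP⟩, heq⟩
      cases heq
      exact ⟨⟨mem_zslice.1 hy, hP⟩, rfl⟩
  rw [he, Finset.card_image_of_injective _ (fun x y h => congrArg Prod.snd h)]

lemma card_eq_sum_zslice (A : Finset (ZMod m × G)) :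
    A.card = ∑ j : ZMod m, (zslice A j).card := by
  classical
  have h := card_filter_prod A (fun _ => True)
  simpa using h

lemma edgeBoundary_prod (hm : 1 < m) (A : Finset (ZMod m × G)) (S : Finset G) :
    edgeBoundary A (insert ((1:ZMod m), (0:G)) (S.image (fun s => ((0:ZMod m), s))))
    = (∑ j : ZMod m, edgeBoundary (zslice A j) S)
      + ∑ j : ZMod m, ((zslice A j) \ (zslice A (j+1))).card := by
  classical
  haveI : Fact (1 < m) := ⟨hm⟩
  have h10 : (1 : ZMod m) ≠ 0 := one_ne_zero
  have hv : ((1:ZMod m), (0:G)) ∉ S.image (fun s => ((0:ZMod m), s)) := by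
    simp only [Finset.mem_image, Prod.mk.injEq, not_exists]
    rintro s ⟨_, h, _⟩
    exact h10 h.symm
  rw [edgeBoundary_eq_sum, Finset.sum_insert hv,
    Finset.sum_image (fun x _ y _ h => congrArg Prod.snd h)]
  have hvert : (A.filter (fun a => a + ((1:ZMod m), (0:G)) ∉ A)).card
      = ∑ j : ZMod m, ((zslice A j) \ (zslice A (j+1))).card := by
    rw [card_filter_prod A (fun q => q + ((1:ZMod m), (0:G)) ∉ A)]
    apply Finset.sum_congr rfl
    intro j _
    congr 1
    rw [Finset.sdiff_eq_filter]
    apply Finset.filter_congr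
    intro x _
    simp only [Prod.mk_add_mk, add_zero, mem_zslice]
  have hhor : ∀ s, (A.filter (fun a => a + ((0:ZMod m), s) ∉ A)).card
      = ∑ j : ZMod m, ((zslice A j).filter (fun x => x + s ∉ zslice A j)).card := by
    intro s
    rw [card_filter_prod A (fun q => q + ((0:ZMod m), s) ∉ A)]
    apply Finset.sum_congr rfl
    intro j _
    congr 1
    apply Finset.filter_congr
    intro x _
    simp [Prod.mk_add_mk, add_zero, mem_zslice]
  rw [hvert]
  have hS : ∑ s ∈ S, (A.filter (fun a => a + ((0:ZMod m), s) ∉ A)).card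
      = ∑ j : ZMod m, edgeBoundary (zslice A j) S := by
    rw [Finset.sum_congr rfl (fun s _ => hhor s), Finset.sum_comm]
    exact Finset.sum_congr rfl (fun j _ => (edgeBoundary_eq_sum _ _).symm)
  rw [hS]
  ring

lemma sdiff_card_triangle (X Y Z : Finset G) :
    (X \ Z).card ≤ (X \ Y).card + (Y \ Z).card := by
  have hsub : X \ Z ⊆ (X \ Y) ∪ (Y \ Z) := by
    intro x hx
    simp only [Finset.mem_sdiff, Finset.mem_union] at hx ⊢
    tauto
  exact le_trans (Finset.card_le_card hsub) (Finset.card_union_le _ _)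

lemma chain_bound (B : ZMod m → Finset G) (j0 : ZMod m) (l : ℕ) :
    (B j0 \ B (j0 + (l:ZMod m))).card
      ≤ ∑ t ∈ Finset.range l, (B (j0 + (t:ZMod m)) \ B (j0 + (t:ZMod m) + 1)).card := by
  induction l with
  | zero => simp
  | succ k ih =>
    rw [Finset.sum_range_succ]
    have tri := sdiff_card_triangle (B j0) (B (j0 + (k:ZMod m))) (B (j0 + (k:ZMod m) + 1))
    have hc : (j0 + ((k+1:ℕ):ZMod m)) = j0 + (k:ZMod m) + 1 := by push_cast; ring
    rw [hc]
    omega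

lemma vertical_bound (B : ZMod m → Finset G) (j0 j1 : ZMod m) :
    (B j0).card ≤ (B j1).card + ∑ j : ZMod m, (B j \ B (j+1)).card := by
  classical
  have h1 : (B j0).card ≤ (B j1).card + (B j0 \ B j1).card := by
    have hsub : B j0 ⊆ B j1 ∪ (B j0 \ B j1) := by
      intro x hx
      simp only [Finset.mem_union, Finset.mem_sdiff]
      tauto
    exact le_trans (Finset.card_le_card hsub) (Finset.card_union_le _ _)
  set l := (j1 - j0).val with hl
  have hj1 : j1 = j0 + (l : ZMod m) := by
    rw [hl, ZMod.natCast_val, ZMod.cast_id]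
    ring
  have h2 := chain_bound B j0 l
  have h3 : ∑ t ∈ Finset.range l, (B (j0 + (t:ZMod m)) \ B (j0 + (t:ZMod m) + 1)).card
      ≤ ∑ j : ZMod m, (B j \ B (j+1)).card := by
    have hinj : ∀ x ∈ Finset.range l, ∀ y ∈ Finset.range l,
        j0 + (x:ZMod m) = j0 + (y:ZMod m) → x = y := by
      intro x hx y hy hxy
      have hlm : l < m := ZMod.val_lt _
      have hx' : x < m := lt_trans (Finset.mem_range.1 hx) hlm
      have hy' : y < m := lt_trans (Finset.mem_range.1 hy) hlm
      have : (x : ZMod m) = (y : ZMod m) := by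
        have := add_left_cancel hxy
        exact this
      calc x = ((x : ZMod m)).val := (ZMod.val_cast_of_lt hx').symm
        _ = ((y : ZMod m)).val := by rw [this]
        _ = y := ZMod.val_cast_of_lt hy'
    have himg := Finset.sum_image (s := Finset.range l)
      (g := fun t : ℕ => j0 + (t : ZMod m)) (f := fun j => (B j \ B (j+1)).card) hinj
    rw [← himg]
    exact Finset.sum_le_sum_of_subset (Finset.subset_univ _)
  rw [hj1] at h1 ⊢
  omega

end Comb

lemma glue (m : ℕ) (hm : m = 2 ∨ m = 3 ∨ m = 4) {ι : Type*} [Fintype ι] [DecidableEq ι]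
    (hcard : Fintype.card ι = m) (a : ι → ℝ) (ha : ∀ j, 0 ≤ a j)
    (hT : 0 < ∑ j, a j) (j0 j1 : ι) (hmax : ∀ j, a j ≤ a j0) (hmin : ∀ j, a j1 ≤ a j)
    (n : ℝ) :
    (n + 1 - Real.logb m (∑ j, a j)) * (∑ j, a j)
      ≤ (∑ j, (n - Real.logb m (a j)) * a j) + (a j0 - a j1) := by
  have hm2 : (2:ℝ) ≤ (m:ℝ) := by rcases hm with h|h|h <;> subst h <;> norm_num
  have hlogm : 0 < Real.log m := Real.log_pos (by linarith)
  set T := ∑ j, a j with hTdef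
  set p := fun j => a j / T with hp
  have hpnn : ∀ j, 0 ≤ p j := fun j => div_nonneg (ha j) hT.le
  have hpsum : ∑ j, p j = 1 := by
    rw [hp, ← Finset.sum_div]
    exact div_self hT.ne'
  have hpmax : ∀ j, p j ≤ p j0 := fun j => by
    apply div_le_div_of_nonneg_right (hmax j) hT.le  -- may need name fix
  have hpmin : ∀ j, p j1 ≤ p j := fun j => by
    apply div_le_div_of_nonneg_right (hmin j) hT.le
  have hE := entropy_main m hm hcard p hpnn hpsum j0 j1 hpmax hpmin
  have hterm : ∀ j, (Real.logb m T - Real.logb m (a j)) * a j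
      = (T / Real.log m) * -(p j * Real.log (p j)) := by
    intro j
    rcases eq_or_lt_of_le (ha j) with h0 | h0
    · rw [← h0]
      simp [hp, ← h0]
    · have hlp : Real.log (p j) = Real.log (a j) - Real.log T := by
        rw [hp]
        exact Real.log_div h0.ne' hT.ne'
      rw [hlp, hp, Real.logb, Real.logb]
      field_simp
      ring
  have hsum1 : ∑ j, (Real.logb m T - Real.logb m (a j)) * a j
      = (T / Real.log m) * ∑ j, -(p j * Real.log (p j)) := by
    rw [Finset.mul_sum]
    exact Finset.sum_congr rfl (fun j _ => hterm j)
  have hpj0 : p j0 * T = a j0 := by rw [hp]; field_simp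
  have hpj1 : p j1 * T = a j1 := by rw [hp]; field_simp
  have hEbound : T - a j0 + a j1 ≤ ∑ j, (Real.logb m T - Real.logb m (a j)) * a j := by
    rw [hsum1]
    calc T - a j0 + a j1 = (T / Real.log m) * ((1 - p j0 + p j1) * Real.log m) := by
          field_simp
          nlinarith [hpj0, hpj1]
      _ ≤ _ := mul_le_mul_of_nonneg_left hE (div_nonneg hT.le hlogm.le)
  have hsplit : ∑ j, (Real.logb m T - Real.logb m (a j)) * a j
      = Real.logb m T * T - ∑ j, Real.logb m (a j) * a j := by
    rw [Finset.sum_congr rfl (fun j _ =>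
      show (Real.logb m T - Real.logb m (a j)) * a j
        = Real.logb m T * a j - Real.logb m (a j) * a j by ring)]
    rw [Finset.sum_sub_distrib, ← Finset.mul_sum, ← hTdef]
  have hgoal : ∑ j, (n - Real.logb m (a j)) * a j
      = n * T - ∑ j, Real.logb m (a j) * a j := by
    rw [Finset.sum_congr rfl (fun j _ =>
      show (n - Real.logb m (a j)) * a j = n * a j - Real.logb m (a j) * a j by ring)]
    rw [Finset.sum_sub_distrib, ← Finset.mul_sum, ← hTdef]
  rw [hgoal]
  rw [hsplit] at hEbound
  nlinarith [hEbound]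

def stdGens (m n : ℕ) : Finset (Fin n → ZMod m) :=
  Finset.univ.image (fun i => Pi.single i (1 : ZMod m))

def prodEquiv (m n : ℕ) : (Fin (n+1) → ZMod m) ≃+ (ZMod m × (Fin n → ZMod m)) :=
  { (Fin.consEquiv fun _ : Fin (n+1) => ZMod m).symm with map_add' := fun _ _ => rfl }

lemma prodEquiv_single_zero (m n : ℕ) :
    prodEquiv m n (Pi.single 0 (1 : ZMod m)) = ((1:ZMod m), (0 : Fin n → ZMod m)) := by
  unfold prodEquiv
  apply Prod.ext
  · simp [Fin.consEquiv]
  · funext i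
    simp [Fin.consEquiv, Fin.tail, Pi.single_apply, (Fin.succ_ne_zero i)]

lemma prodEquiv_single_succ (m n : ℕ) (i : Fin n) :
    prodEquiv m n (Pi.single i.succ (1 : ZMod m)) = ((0:ZMod m), Pi.single i 1) := by
  unfold prodEquiv
  apply Prod.ext
  · simp [Fin.consEquiv, Pi.single_apply, (Fin.succ_ne_zero i).symm]
  · funext j
    simp [Fin.consEquiv, Fin.tail, Pi.single_apply, Fin.succ_inj]

lemma stdGens_image (m n : ℕ) :
    (stdGens m (n+1)).image (prodEquiv m n)
      = insert ((1:ZMod m), (0 : Fin n → ZMod m))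
          ((stdGens m n).image (fun s => ((0:ZMod m), s))) := by
  classical
  unfold stdGens
  ext q
  simp only [Finset.mem_image, Finset.mem_insert, Finset.mem_univ, true_and]
  constructor
  · rintro ⟨g, ⟨i, rfl⟩, rfl⟩
    rcases Fin.eq_zero_or_eq_succ i with rfl | ⟨k, rfl⟩
    · left; exact prodEquiv_single_zero m n
    · right
      exact ⟨Pi.single k 1, ⟨k, rfl⟩, (prodEquiv_single_succ m n k).symm ▸ rfl⟩
  · rintro (rfl | ⟨s, ⟨i, rfl⟩, rfl⟩)
    · exact ⟨Pi.single 0 1, ⟨0, rfl⟩, prodEquiv_single_zero m n⟩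
    · exact ⟨Pi.single i.succ 1, ⟨i.succ, rfl⟩, prodEquiv_single_succ m n i⟩

theorem core (m : ℕ) (hm : m = 2 ∨ m = 3 ∨ m = 4) :
    ∀ (n : ℕ) (A : Finset (Fin n → ZMod m)), A.Nonempty →
      ((n : ℝ) - Real.logb m A.card) * A.card ≤ (edgeBoundary A (stdGens m n) : ℝ) := by
  haveI : NeZero m := ⟨by omega⟩
  have hm1 : 1 < m := by omega
  intro n
  induction n with
  | zero =>
    intro A hA
    have hcard : A.card = 1 := by
      have hle : A.card ≤ Fintype.card (Fin 0 → ZMod m) := Finset.card_le_univ A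
      have h1 : Fintype.card (Fin 0 → ZMod m) = 1 := by simp
      have hge : 1 ≤ A.card := Finset.card_pos.2 hA
      omega
    rw [hcard]
    simp
  | succ n ih =>
    intro A hA
    set E := prodEquiv m n with hE
    set B := A.image (fun x => E x) with hB
    have hBcard : B.card = A.card := Finset.card_image_of_injective _ E.injective
    have htrans : edgeBoundary A (stdGens m (n+1))
        = (∑ j : ZMod m, edgeBoundary (zslice B j) (stdGens m n))
          + ∑ j : ZMod m, ((zslice B j) \ (zslice B (j+1))).card := by
      rw [← edgeBoundary_image_equiv E A (stdGens m (n+1))]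
      rw [show (stdGens m (n+1)).image (fun x => E x)
            = insert ((1:ZMod m), (0 : Fin n → ZMod m))
              ((stdGens m n).image (fun s => ((0:ZMod m), s))) from stdGens_image m n]
      exact edgeBoundary_prod hm1 B (stdGens m n)
    -- real-valued slice sizes
    set a : ZMod m → ℝ := fun j => ((zslice B j).card : ℝ) with ha
    have hann : ∀ j, 0 ≤ a j := fun j => Nat.cast_nonneg _
    have hTsum : ∑ j, a j = (A.card : ℝ) := by
      rw [ha, ← Nat.cast_sum, ← card_eq_sum_zslice B, hBcard]
    have hTpos : 0 < ∑ j, a j := by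
      rw [hTsum]
      exact_mod_cast Finset.card_pos.2 hA
    obtain ⟨j0, _, hmax⟩ := Finset.exists_max_image (Finset.univ : Finset (ZMod m))
      (fun j => a j) ⟨0, Finset.mem_univ 0⟩
    obtain ⟨j1, _, hmin⟩ := Finset.exists_min_image (Finset.univ : Finset (ZMod m))
      (fun j => a j) ⟨0, Finset.mem_univ 0⟩
    have hmax' : ∀ j, a j ≤ a j0 := fun j => hmax j (Finset.mem_univ j)
    have hmin' : ∀ j, a j1 ≤ a j := fun j => hmin j (Finset.mem_univ j)
    have hIH : ∀ j : ZMod m, ((n : ℝ) - Real.logb m (a j)) * (a j)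
        ≤ (edgeBoundary (zslice B j) (stdGens m n) : ℝ) := by
      intro j
      rcases Finset.eq_empty_or_nonempty (zslice B j) with he | hne
      · rw [ha]
        simp [he]
      · exact ih (zslice B j) hne
    have hglue := glue m hm (ZMod.card m) a hann hTpos j0 j1 hmax' hmin' (n : ℝ)
    have hvert : a j0 - a j1 ≤ ((∑ j : ZMod m, ((zslice B j) \ (zslice B (j+1))).card : ℕ) : ℝ) := by
      have := vertical_bound (fun j => zslice B j) j0 j1
      have hc : ((zslice B j0).card : ℝ) ≤ ((zslice B j1).card : ℝ)
          + ((∑ j : ZMod m, ((zslice B j) \ (zslice B (j+1))).card : ℕ) : ℝ) := by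
        exact_mod_cast this
      rw [ha]
      linarith
    have hsum2 : (∑ j : ZMod m, ((n : ℝ) - Real.logb m (a j)) * (a j))
        ≤ ((∑ j : ZMod m, edgeBoundary (zslice B j) (stdGens m n) : ℕ) : ℝ) := by
      rw [Nat.cast_sum]
      exact Finset.sum_le_sum (fun j _ => hIH j)
    rw [htrans]
    push_cast [Nat.cast_sum]
    push_cast [Nat.cast_sum] at hsum2 hvert
    have hfin : ((n:ℝ) + 1 - Real.logb m (A.card)) * (A.card : ℝ)
        ≤ _ := le_trans (by rw [← hTsum]; exact hglue) (by linarith : 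
          (∑ j, ((n : ℝ) - Real.logb m (a j)) * a j) + (a j0 - a j1)
          ≤ (∑ j : ZMod m, (edgeBoundary (zslice B j) (stdGens m n) : ℝ))
            + ∑ j : ZMod m, (((zslice B j) \ (zslice B (j+1))).card : ℝ))
    calc ((n:ℕ)+1 - Real.logb m (A.card) : ℝ) * (A.card : ℝ) 
        = ((n:ℝ) + 1 - Real.logb m (A.card)) * (A.card : ℝ) := by norm_num
      _ ≤ _ := hfin

section Reduction

variable (p m n : ℕ) [NeZero m] [NeZero p]

/-- the componentwise reduction map -/
def piProj (hdvd : p ∣ m) : (Fin n → ZMod m) →+ (Fin n → ZMod p) where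
  toFun x := fun t => ZMod.castHom hdvd (ZMod p) (x t)
  map_zero' := by funext t; exact map_zero (ZMod.castHom hdvd (ZMod p))
  map_add' x y := by funext t; exact map_add (ZMod.castHom hdvd (ZMod p)) _ _

lemma piProj_surjective (hdvd : p ∣ m) : Function.Surjective (piProj p m n hdvd) := by
  intro y
  refine ⟨fun t => ((y t).val : ZMod m), ?_⟩
  funext t
  show ZMod.castHom hdvd (ZMod p) (((y t).val : ZMod m)) = y t
  rw [map_natCast, ZMod.natCast_val, ZMod.cast_id]

lemma nakayama (k : ℕ) (hm : m = p ^ k) (hdvd : p ∣ m)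
    (hkill : ∀ x : ZMod m, ZMod.castHom hdvd (ZMod p) x = 0 → ∃ y, x = (p : ZMod m) * y)
    (u : Fin n → (Fin n → ZMod m))
    (hspan : Submodule.span (ZMod p) (Set.range (fun i => piProj p m n hdvd (u i))) = ⊤) :
    Submodule.span (ZMod m) (Set.range u) = ⊤ := by
  set N := Submodule.span (ZMod m) (Set.range u) with hN
  -- step: every y decomposes as h' + p • w with h' ∈ N
  have step : ∀ y : Fin n → ZMod m, ∃ h' ∈ N, ∃ w, y = h' + p • w := by
    intro y
    have hy : piProj p m n hdvd y ∈ Submodule.span (ZMod p)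
        (Set.range (fun i => piProj p m n hdvd (u i))) := by
      rw [hspan]; trivial
    rw [Submodule.mem_span_range_iff_exists_fun] at hy
    obtain ⟨c, hc⟩ := hy
    set h' : Fin n → ZMod m := ∑ i, (c i).val • u i with hh'
    have hmem : h' ∈ N := by
      apply Submodule.sum_mem
      intro i _
      exact Submodule.smul_of_tower_mem _ _ (Submodule.subset_span (Set.mem_range_self i))
    have hproj : piProj p m n hdvd (y - h') = 0 := by
      rw [map_sub, hh', map_sum]
      have : ∀ i, piProj p m n hdvd ((c i).val • u i)
          = c i • piProj p m n hdvd (u i) := by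
        intro i
        rw [map_nsmul, ← Nat.cast_smul_eq_nsmul (ZMod p), ZMod.natCast_val, ZMod.cast_id]
      rw [Finset.sum_congr rfl (fun i _ => this i), hc]
      simp
    -- extract w componentwise
    have hcomp : ∀ t, ∃ w, (y - h') t = (p : ZMod m) * w := by
      intro t
      apply hkill
      have := congrFun hproj t
      exact this
    choose w hw using hcomp
    refine ⟨h', hmem, w, ?_⟩
    funext t
    have : (p • w) t = (p : ZMod m) * w t := by
      simp [nsmul_eq_mul]
    have h2 := hw t
    simp only [Pi.sub_apply] at h2
    simp only [Pi.add_apply, this]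
    linear_combination h2
  -- iterate
  have iter : ∀ t : ℕ, ∀ x : Fin n → ZMod m, ∃ h ∈ N, ∃ y, x = h + (p ^ t) • y := by
    intro t
    induction t with
    | zero => intro x; exact ⟨0, Submodule.zero_mem N, x, by simp⟩
    | succ t ih =>
      intro x
      obtain ⟨h, hh, y, hy⟩ := ih x
      obtain ⟨h', hh', w, hw⟩ := step y
      refine ⟨h + (p ^ t) • h', Submodule.add_mem N hh
        (Submodule.smul_of_tower_mem _ _ hh'), w, ?_⟩
      rw [hy, hw, smul_add, ← add_assoc, smul_smul, ← pow_succ]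
  rw [eq_top_iff]
  intro x _
  obtain ⟨h, hh, y, hy⟩ := iter k x
  have hzero : (p ^ k) • y = 0 := by
    rw [← hm]
    funext t
    simp only [Pi.smul_apply, Pi.zero_apply, nsmul_eq_mul, ZMod.natCast_self, zero_mul]
  rw [hy, hzero, add_zero]
  exact hh

end Reduction

lemma exists_autoequiv (m n : ℕ) [NeZero m] (u : Fin n → (Fin n → ZMod m))
    (hspan : Submodule.span (ZMod m) (Set.range u) = ⊤) :
    ∃ ψ : (Fin n → ZMod m) ≃+ (Fin n → ZMod m), ∀ i, ψ (Pi.single i 1) = u i := by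
  classical
  let b := Pi.basisFun (ZMod m) (Fin n)
  let Φ : (Fin n → ZMod m) →ₗ[ZMod m] (Fin n → ZMod m) := b.constr ℕ u
  have hsurj : Function.Surjective Φ := by
    rw [← LinearMap.range_eq_top, Module.Basis.constr_range]
    exact hspan
  have hinj : Function.Injective Φ := Finite.injective_iff_surjective.2 hsurj
  refine ⟨AddEquiv.ofBijective Φ.toAddMonoidHom ⟨hinj, hsurj⟩, fun i => ?_⟩
  show Φ (Pi.single i 1) = u i
  have hb : (Pi.single i 1 : Fin n → ZMod m) = b i := (Pi.basisFun_apply _ _ i).symm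
  rw [hb]
  exact b.constr_basis ℕ u i

lemma exists_generating_family (p m n : ℕ) [NeZero m] [NeZero p] [Fact p.Prime]
    (k : ℕ) (hmpk : m = p ^ k) (hdvd : p ∣ m)
    (hkill : ∀ x : ZMod m, ZMod.castHom hdvd (ZMod p) x = 0 → ∃ y, x = (p : ZMod m) * y)
    (S : Finset (Fin n → ZMod m))
    (hgen : AddSubgroup.closure (S : Set (Fin n → ZMod m)) = ⊤) :
    ∃ u : Fin n → (Fin n → ZMod m), (∀ i, u i ∈ S) ∧
      Submodule.span (ZMod m) (Set.range u) = ⊤ := by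
  classical
  set prj := piProj p m n hdvd with hprj
  -- image spans over ZMod p
  have hclos : AddSubgroup.closure (prj '' (S : Set (Fin n → ZMod m))) = ⊤ := by
    rw [← AddMonoidHom.map_closure, hgen]
    exact AddSubgroup.map_top_of_surjective _ (piProj_surjective p m n hdvd)
  have hspan : Submodule.span (ZMod p) (prj '' (S : Set (Fin n → ZMod m))) = ⊤ := by
    rw [eq_top_iff]
    intro x _
    have hx : x ∈ AddSubgroup.closure (prj '' (S : Set (Fin n → ZMod m))) := by
      rw [hclos]; trivial
    have hle : AddSubgroup.closure (prj '' (S : Set (Fin n → ZMod m)))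
        ≤ (Submodule.span (ZMod p) (prj '' (S : Set (Fin n → ZMod m)))).toAddSubgroup :=
      AddSubgroup.closure_le _ |>.2 Submodule.subset_span
    exact hle hx
  -- extract a basis inside the image
  obtain ⟨bset, hbsub, hbspan, hbind⟩ := exists_linearIndependent (ZMod p)
    (prj '' (S : Set (Fin n → ZMod m)))
  rw [hspan] at hbspan
  haveI : Fintype bset := (Set.toFinite bset).fintype
  let bas : Module.Basis bset (ZMod p) (Fin n → ZMod p) :=
    Module.Basis.mk hbind (by rw [Subtype.range_coe, hbspan])
  have hcardb : Fintype.card bset = n := by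
    have h1 := Module.finrank_eq_card_basis bas
    have h2 : Module.finrank (ZMod p) (Fin n → ZMod p) = n := by
      rw [Module.finrank_pi]
      simp
    omega
  let e : Fin n ≃ bset := (Fintype.equivFinOfCardEq hcardb).symm
  have hchoice : ∀ i : Fin n, ∃ s, s ∈ S ∧ prj s = (e i : Fin n → ZMod p) := by
    intro i
    have : ((e i : Fin n → ZMod p)) ∈ prj '' (S : Set (Fin n → ZMod m)) :=
      hbsub (e i).2
    obtain ⟨s, hs, hprjs⟩ := this
    exact ⟨s, hs, hprjs⟩
  choose u hu hprju using hchoice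
  refine ⟨u, hu, ?_⟩
  apply nakayama p m n k hmpk hdvd hkill
  -- span of projections = ⊤ since they enumerate the basis
  have hrange : Set.range (fun i => prj (u i)) = bset := by
    have h0 : (fun i => prj (u i)) = (fun i => (e i : Fin n → ZMod p)) := funext hprju
    rw [h0]
    have : (fun i => (e i : Fin n → ZMod p)) = Subtype.val ∘ e := rfl
    rw [this, Set.range_comp, Equiv.range_eq_univ, Set.image_univ, Subtype.range_coe]
  rw [hrange, hbspan]

lemma hkill2 : ∀ x : ZMod 2, ZMod.castHom (dvd_refl 2) (ZMod 2) x = 0 →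
    ∃ y, x = ((2:ℕ) : ZMod 2) * y := by decide

lemma hkill3 : ∀ x : ZMod 3, ZMod.castHom (dvd_refl 3) (ZMod 3) x = 0 →
    ∃ y, x = ((3:ℕ) : ZMod 3) * y := by decide

lemma hkill4 : ∀ x : ZMod 4, ZMod.castHom (show (2:ℕ) ∣ 4 by norm_num) (ZMod 2) x = 0 →
    ∃ y, x = ((2:ℕ) : ZMod 4) * y := by decide

/-- **Theorem 1 (exp234).** Let `G` be a homocyclic finite abelian group of exponent
`m ∈ {2,3,4}` and rank `n` (i.e. `G ≅ C_m^n`). If `A ⊆ G` is non-empty, `S ⊆ G` is a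
generating subset, `γ ∈ (0,1]`, and `∂_S(A) ≤ (1-γ)·n·|A|`, then `|A| ≥ |G|^γ`. -/
theorem isoperimetric_exp234 {G : Type*} [AddCommGroup G] [Fintype G] [DecidableEq G]
    (m n : ℕ) (hm : m = 2 ∨ m = 3 ∨ m = 4)
    (hG : Nonempty (G ≃+ (Fin n → ZMod m)))
    (S : Finset G) (hgen : AddSubgroup.closure (S : Set G) = ⊤)
    (A : Finset G) (hA : A.Nonempty)
    (γ : ℝ) (hγ0 : 0 < γ) (hγ1 : γ ≤ 1)
    (hbd : (edgeBoundary A S : ℝ) ≤ (1 - γ) * n * A.card) :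
    (Fintype.card G : ℝ) ^ γ ≤ A.card := by
  classical
  obtain ⟨φ⟩ := hG
  haveI : NeZero m := ⟨by omega⟩
  have hm2 : 2 ≤ m := by omega
  have hm1' : (1:ℝ) < (m:ℝ) := by exact_mod_cast by omega
  set A' := A.image φ with hA'
  set S' := S.image φ with hS'
  have hA'card : A'.card = A.card := Finset.card_image_of_injective _ φ.injective
  have hgen' : AddSubgroup.closure (S' : Set (Fin n → ZMod m)) = ⊤ := by
    rw [hS', Finset.coe_image]
    have h1 : (⇑φ '' (S : Set G)) = (⇑φ.toAddMonoidHom '' (S : Set G)) := by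
      simp
    rw [h1, ← AddMonoidHom.map_closure φ.toAddMonoidHom, hgen]
    exact AddSubgroup.map_top_of_surjective _ φ.surjective
  obtain ⟨u, hu, hspan⟩ : ∃ u : Fin n → (Fin n → ZMod m), (∀ i, u i ∈ S') ∧
      Submodule.span (ZMod m) (Set.range u) = ⊤ := by
    rcases hm with rfl | rfl | rfl
    · haveI : Fact (Nat.Prime 2) := ⟨by norm_num⟩
      exact exists_generating_family 2 2 n 1 (by norm_num) (dvd_refl 2) hkill2 S' hgen'
    · haveI : Fact (Nat.Prime 3) := ⟨by norm_num⟩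
      exact exists_generating_family 3 3 n 1 (by norm_num) (dvd_refl 3) hkill3 S' hgen'
    · haveI : Fact (Nat.Prime 2) := ⟨by norm_num⟩
      exact exists_generating_family 2 4 n 2 (by norm_num) (show (2:ℕ) ∣ 4 by norm_num)
        hkill4 S' hgen'
  obtain ⟨ψ, hψ⟩ := exists_autoequiv m n u hspan
  set A2 := A'.image (fun x => ψ.symm x) with hA2
  have hA2card : A2.card = A.card := by
    rw [hA2, Finset.card_image_of_injective _ ψ.symm.injective, hA'card]
  have hA2ne : A2.Nonempty := ((hA.image _).image _)
  have hcore := core m hm n A2 hA2ne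
  have hb1 : edgeBoundary A2 (stdGens m n) ≤ edgeBoundary A S := by
    have h1 : edgeBoundary A2 (stdGens m n)
        = edgeBoundary (A2.image (fun x => ψ x)) ((stdGens m n).image (fun x => ψ x)) :=
      (edgeBoundary_image_equiv ψ _ _).symm
    have h2 : A2.image (fun x => ψ x) = A' := by
      rw [hA2, Finset.image_image]
      have hid : ((fun x => ψ x) ∘ (fun x => ψ.symm x)) = id :=
        funext fun x => ψ.apply_symm_apply x
      rw [hid, Finset.image_id]
    have h3 : (stdGens m n).image (fun x => ψ x) ⊆ S' := by
      intro x hx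
      simp only [stdGens, Finset.mem_image, Finset.mem_univ, true_and] at hx
      obtain ⟨g, ⟨i, rfl⟩, rfl⟩ := hx
      rw [hψ i]
      exact hu i
    calc edgeBoundary A2 (stdGens m n)
        = edgeBoundary A' ((stdGens m n).image (fun x => ψ x)) := by rw [h1, h2]
      _ ≤ edgeBoundary A' S' := edgeBoundary_mono _ h3
      _ = edgeBoundary A S := edgeBoundary_image_equiv φ A S
  have hAcard_pos : (0:ℝ) < A.card := by exact_mod_cast Finset.card_pos.2 hA
  have hchain : ((n:ℝ) - Real.logb m A.card) * A.card ≤ (1 - γ) * n * A.card := by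
    calc ((n:ℝ) - Real.logb m A.card) * A.card
        = ((n:ℝ) - Real.logb m A2.card) * A2.card := by rw [hA2card]
      _ ≤ (edgeBoundary A2 (stdGens m n) : ℝ) := hcore
      _ ≤ (edgeBoundary A S : ℝ) := by exact_mod_cast hb1
      _ ≤ _ := hbd
  have hlogb : γ * n ≤ Real.logb m A.card := by
    have h := (mul_le_mul_iff_of_pos_right hAcard_pos).1 hchain
    nlinarith
  have hcardG : (Fintype.card G : ℝ) = ((m:ℝ)) ^ (n:ℕ) := by
    have h1 : Fintype.card G = Fintype.card (Fin n → ZMod m) := Fintype.card_congr φ.toEquiv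
    have h2 : Fintype.card (Fin n → ZMod m) = m ^ n := by simp [ZMod.card]
    rw [h1, h2]
    push_cast
    ring
  rw [hcardG]
  calc ((m:ℝ) ^ (n:ℕ)) ^ γ = (m:ℝ) ^ ((n:ℝ) * γ) := by
        rw [← Real.rpow_natCast (m:ℝ) n, ← Real.rpow_mul (by positivity)]
    _ ≤ (m:ℝ) ^ (Real.logb m A.card) := by
        rw [Real.rpow_le_rpow_left_iff hm1']
        linarith
    _ = A.card := Real.rpow_logb (by positivity) (ne_of_gt hm1') hAcard_pos
end

section
/- Let A and S be finite non-empty subsets of an abelian group such that S is independent and every element of S has finite order. Write n = |S| and let d = min{ord s : s ∈ S}. If ∂_S(A) ≤ (1-γ)·n·|A| with a real γ ∈ (0,1], then |A| ≥ 4^{(1-1/d)·γ·n}. -/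
/-- A finite subset `S` of an abelian group is independent if whenever an integral linear
combination `∑_{s ∈ S} k(s)·s` vanishes, every summand `k(s)·s` vanishes. -/
def IsIndependent {G : Type*} [AddCommGroup G] (S : Finset G) : Prop :=
  ∀ k : G → ℤ, ∑ s ∈ S, k s • s = 0 → ∀ s ∈ S, k s • s = 0


open Finset
open scoped Classical

section Aux

/-- Key real inequality: `(x-1)·log 4 ≤ x·log x` for `x ≥ 2`. -/
lemma key_log {x : ℝ} (hx : 2 ≤ x) : (x - 1) * Real.log 4 ≤ x * Real.log x := by
  have hx0 : (0:ℝ) < x := by linarith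
  have h4 : Real.log 4 = 2 * Real.log 2 := by
    rw [show (4:ℝ) = 2^2 by norm_num, Real.log_pow]; push_cast; ring
  have h1 : Real.log (2/x) ≤ 2/x - 1 := Real.log_le_sub_one_of_pos (by positivity)
  have h2 : Real.log (2/x) = Real.log 2 - Real.log x := Real.log_div (by norm_num) (by positivity)
  have h3 : Real.log 2 ≤ 1 := by
    have := Real.log_le_sub_one_of_pos (show (0:ℝ) < 2 by norm_num); linarith
  -- log x ≥ log 2 + 1 - 2/x
  have h5 : Real.log 2 + 1 - 2/x ≤ Real.log x := by linarith
  have h6 : x * (Real.log 2 + 1 - 2/x) ≤ x * Real.log x :=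
    mul_le_mul_of_nonneg_left h5 (le_of_lt hx0)
  have h7 : x * (Real.log 2 + 1 - 2/x) = x * Real.log 2 + x - 2 := by
    field_simp
  -- (x-1)*2*log2 ≤ x log 2 + x - 2  ⇔  (x-2)(1-log2) ≥ 0
  nlinarith [mul_nonneg (show (0:ℝ) ≤ x - 2 by linarith) (show (0:ℝ) ≤ 1 - Real.log 2 by linarith)]

/-- Jensen-type: if positive integer weights on `A` sum to at most `|A|²`,
then the sum of their logs is at most `|A| log |A|`. -/
lemma log_sum_le {α : Type*} (A : Finset α) (u : α → ℕ) (hu : ∀ a ∈ A, 1 ≤ u a)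
    (hsum : (∑ a ∈ A, u a) ≤ A.card ^ 2) :
    ∑ a ∈ A, Real.log (u a) ≤ A.card * Real.log A.card := by
  rcases A.eq_empty_or_nonempty with rfl | hA
  · simp
  have hk : (0:ℝ) < A.card := by exact_mod_cast Finset.card_pos.2 hA
  have step : ∀ a ∈ A, Real.log (u a) ≤ (u a : ℝ)/A.card - 1 + Real.log A.card := by
    intro a ha
    have hua : (0:ℝ) < (u a : ℝ) := by exact_mod_cast (hu a ha)
    have := Real.log_le_sub_one_of_pos (show (0:ℝ) < (u a : ℝ)/A.card by positivity)
    have hdiv : Real.log ((u a : ℝ)/A.card) = Real.log (u a) - Real.log A.card :=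
      Real.log_div (by positivity) (by positivity)
    linarith
  calc ∑ a ∈ A, Real.log (u a) ≤ ∑ a ∈ A, ((u a : ℝ)/A.card - 1 + Real.log A.card) :=
        Finset.sum_le_sum step
    _ = (∑ a ∈ A, (u a : ℝ))/A.card - A.card + A.card * Real.log A.card := by
        rw [Finset.sum_add_distrib, Finset.sum_sub_distrib, ← Finset.sum_div]
        simp [mul_comm]
    _ ≤ A.card * Real.log A.card := by
        have hs : (∑ a ∈ A, (u a : ℝ)) ≤ (A.card:ℝ)^2 := by exact_mod_cast hsum
        have : (∑ a ∈ A, (u a : ℝ))/A.card ≤ (A.card:ℝ) := by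
          rw [div_le_iff₀ hk]; nlinarith
        linarith

lemma matrix_log {α β γ : Type*} [DecidableEq α] [DecidableEq β] [DecidableEq γ]
    (A : Finset α) (f : α → β) (g : α → γ)
    (hinj : ∀ a ∈ A, ∀ b ∈ A, f a = f b → g a = g b → a = b) :
    ∑ a ∈ A, (Real.log ((A.filter fun x => f x = f a).card) +
      Real.log ((A.filter fun x => g x = g a).card)) ≤ A.card * Real.log A.card := by
  set row : α → Finset α := fun a => A.filter fun x => f x = f a with hrow
  set col : α → Finset α := fun a => A.filter fun x => g x = g a with hcol
  have hr1 : ∀ a ∈ A, 1 ≤ (row a).card := fun a ha =>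
    Finset.card_pos.2 ⟨a, Finset.mem_filter.2 ⟨ha, rfl⟩⟩
  have hc1 : ∀ a ∈ A, 1 ≤ (col a).card := fun a ha =>
    Finset.card_pos.2 ⟨a, Finset.mem_filter.2 ⟨ha, rfl⟩⟩
  have hsum : (∑ a ∈ A, (row a).card * (col a).card) ≤ A.card ^ 2 := by
    have hdisj : (A : Set α).PairwiseDisjoint (fun a => (row a) ×ˢ (col a)) := by
      intro a ha b hb hab
      simp only [Finset.disjoint_left]
      rintro ⟨y, z⟩ hya hyb
      simp only [hrow, hcol, Finset.mem_product, Finset.mem_filter] at hya hyb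
      exact absurd (hinj a ha b hb (hya.1.2.symm.trans hyb.1.2) (hya.2.2.symm.trans hyb.2.2)) hab
    calc (∑ a ∈ A, (row a).card * (col a).card)
        = ∑ a ∈ A, ((row a) ×ˢ (col a)).card := by
          simp [Finset.card_product]
      _ = (A.biUnion fun a => (row a) ×ˢ (col a)).card := (Finset.card_biUnion hdisj).symm
      _ ≤ (A ×ˢ A).card := by
          apply Finset.card_le_card
          intro p hp
          rcases Finset.mem_biUnion.1 hp with ⟨a, _, hpa⟩
          rcases Finset.mem_product.1 hpa with ⟨h1, h2⟩
          exact Finset.mem_product.2 ⟨(Finset.mem_filter.1 h1).1, (Finset.mem_filter.1 h2).1⟩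
      _ = A.card ^ 2 := by rw [Finset.card_product]; ring
  have := log_sum_le A (fun a => (row a).card * (col a).card)
    (fun a ha => Nat.one_le_iff_ne_zero.2 (Nat.mul_ne_zero
      (Nat.one_le_iff_ne_zero.1 (hr1 a ha)) (Nat.one_le_iff_ne_zero.1 (hc1 a ha)))) hsum
  refine le_trans (le_of_eq ?_) this
  apply Finset.sum_congr rfl
  intro a ha
  push_cast
  rw [Real.log_mul (by exact_mod_cast Nat.one_le_iff_ne_zero.1 (hr1 a ha))
    (by exact_mod_cast Nat.one_le_iff_ne_zero.1 (hc1 a ha))]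


variable {G : Type*} [AddCommGroup G] [DecidableEq G]

lemma indep_subset {S T : Finset G} (h : IsIndependent S) (hTS : T ⊆ S) : IsIndependent T := by
  intro k hk s hs
  set k' : G → ℤ := fun g => if g ∈ T then k g else 0 with hk'
  have hsum : ∑ g ∈ S, k' g • g = ∑ g ∈ T, k' g • g :=
    (Finset.sum_subset hTS (fun x _ hnx => by simp [hk', hnx])).symm
  have hTsum : ∑ g ∈ T, k' g • g = ∑ g ∈ T, k g • g :=
    Finset.sum_congr rfl (fun g hg => by simp [hk', hg])
  have := h k' (by rw [hsum, hTsum, hk]) s (hTS hs)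
  simpa [hk', hs] using this

lemma indep_disjoint {S' : Finset G} {s : G} (hind : IsIndependent (insert s S')) (hs : s ∉ S')
    {k : ℤ} (hk : k • s ∈ Submodule.span ℤ ((S' : Set G))) : k • s = 0 := by
  obtain ⟨f, -, hf⟩ := Submodule.mem_span_finset.1 hk
  set k' : G → ℤ := fun g => if g = s then k else - f g with hk'
  have hsum : ∑ g ∈ insert s S', k' g • g = 0 := by
    rw [Finset.sum_insert hs]
    have h1 : k' s = k := by simp [hk']
    have h2 : ∑ g ∈ S', k' g • g = ∑ g ∈ S', -(f g • g) :=
      Finset.sum_congr rfl (fun g hg => by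
        have hgs : g ≠ s := fun h => hs (h ▸ hg)
        simp [hk', hgs, neg_smul])
    rw [h1, h2, Finset.sum_neg_distrib, hf]
    simp
  have := hind k' hsum s (Finset.mem_insert_self s S')
  simpa [hk'] using this

/-- number of points of `A` on the line through `a` in direction `s` -/
noncomputable def lineCard (A : Finset G) (s : G) (a : G) : ℕ :=
  (A.filter fun b => b - a ∈ Submodule.span ℤ ({s} : Set G)).card

lemma lineCard_eq_fiber (A : Finset G) (s : G) (a : G) :
    lineCard A s a = (A.filter fun x =>
      (Submodule.Quotient.mk x : G ⧸ Submodule.span ℤ ({s} : Set G)) = Submodule.Quotient.mk a).card := by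
  unfold lineCard
  congr 1
  apply Finset.filter_congr
  intro b _
  rw [Submodule.Quotient.eq]


theorem han (S : Finset G) (hind : IsIndependent S) (A : Finset G) :
    ∑ s ∈ S, ∑ a ∈ A, Real.log (lineCard A s a) ≤ A.card * Real.log A.card := by
  induction S using Finset.induction_on generalizing A with
  | empty =>
    simp only [Finset.sum_empty]
    exact mul_nonneg (Nat.cast_nonneg _) (Real.log_natCast_nonneg _)
  | @insert s S' hs ih =>
    have hindS' : IsIndependent S' := indep_subset hind (Finset.subset_insert _ _)
    set H' : Submodule ℤ G := Submodule.span ℤ ((S' : Set G)) with hH'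
    set q : G → G ⧸ H' := fun x => Submodule.Quotient.mk x with hq
    set p : G → G ⧸ Submodule.span ℤ ({s} : Set G) := fun x => Submodule.Quotient.mk x with hp
    rw [Finset.sum_insert hs]
    -- lines through `a` in direction `i ∈ S'` stay within the `q`-fiber of `a`
    have key1 : ∀ i ∈ S', ∀ a ∈ A,
        lineCard A i a = lineCard (A.filter fun x => q x = q a) i a := by
      intro i hi a _
      unfold lineCard
      rw [Finset.filter_filter]
      congr 1
      apply Finset.filter_congr
      intro b _
      have himp : b - a ∈ Submodule.span ℤ ({i} : Set G) → q b = q a := by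
        intro hb
        have : b - a ∈ H' := Submodule.span_mono (by simpa using hi) hb
        simpa [hq] using (Submodule.Quotient.eq H').2 this
      constructor
      · intro h; exact ⟨himp h, h⟩
      · exact fun h => h.2
    -- rewrite the S' part fiberwise and apply the inductive hypothesis on each fiber
    have maps : ∀ a ∈ A, q a ∈ A.image q := fun a ha => Finset.mem_image_of_mem q ha
    have hS'part : ∑ i ∈ S', ∑ a ∈ A, Real.log (lineCard A i a)
        ≤ ∑ a ∈ A, Real.log ((A.filter fun x => q x = q a).card) := by
      rw [Finset.sum_comm]
      rw [← Finset.sum_fiberwise_of_maps_to maps (fun a => ∑ i ∈ S', Real.log (lineCard A i a))]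
      rw [← Finset.sum_fiberwise_of_maps_to maps
        (fun a => Real.log ((A.filter fun x => q x = q a).card))]
      apply Finset.sum_le_sum
      intro c hc
      set F : Finset G := A.filter fun x => q x = c with hF
      have hFa : ∀ a ∈ F, (A.filter fun x => q x = q a) = F := by
        intro a ha
        have hqa : q a = c := (Finset.mem_filter.1 ha).2
        rw [hF]
        apply Finset.filter_congr
        intro b _
        rw [hqa]
      calc ∑ a ∈ F, ∑ i ∈ S', Real.log (lineCard A i a)
          = ∑ a ∈ F, ∑ i ∈ S', Real.log (lineCard F i a) := by
            apply Finset.sum_congr rfl; intro a ha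
            apply Finset.sum_congr rfl; intro i hi
            rw [key1 i hi a (Finset.mem_filter.1 ha).1, hFa a ha]
        _ = ∑ i ∈ S', ∑ a ∈ F, Real.log (lineCard F i a) := Finset.sum_comm
        _ ≤ F.card * Real.log F.card := ih hindS' F
        _ = ∑ a ∈ F, Real.log ((A.filter fun x => q x = q a).card) := by
            rw [Finset.sum_congr rfl (fun a ha => by rw [hFa a ha]), Finset.sum_const,
              nsmul_eq_mul]
    -- the `s`-direction: lineCard counts the `p`-fiber
    have hlc : ∀ a ∈ A, (lineCard A s a : ℝ) = ((A.filter fun x => p x = p a).card : ℝ) := by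
      intro a _
      rw [lineCard_eq_fiber]
    -- injectivity for the matrix lemma
    have hinj : ∀ a ∈ A, ∀ b ∈ A, q a = q b → p a = p b → a = b := by
      intro a _ b _ hqab hpab
      have h1 : a - b ∈ H' := (Submodule.Quotient.eq H').1 hqab
      have h2 : a - b ∈ Submodule.span ℤ ({s} : Set G) := (Submodule.Quotient.eq _).1 hpab
      obtain ⟨k, hk⟩ := Submodule.mem_span_singleton.1 h2
      have : k • s = 0 := indep_disjoint hind hs (by rw [hk]; exact h1)
      have : a - b = 0 := by rw [← hk, this]
      exact sub_eq_zero.1 this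
    have := matrix_log A q p hinj
    rw [Finset.sum_add_distrib] at this
    have hfinal : ∑ a ∈ A, Real.log (lineCard A s a)
        = ∑ a ∈ A, Real.log ((A.filter fun x => p x = p a).card) :=
      Finset.sum_congr rfl (fun a ha => by rw [hlc a ha])
    linarith [hS'part]


lemma dir_bound (d : ℕ) (hd2 : 2 ≤ d) {s : G} (hs : IsOfFinAddOrder s) (hsd : d ≤ addOrderOf s)
    (A : Finset G) :
    (A.card : ℝ) - ((d : ℝ)/((d : ℝ) - 1)) / Real.log 4 * ∑ a ∈ A, Real.log (lineCard A s a)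
      ≤ ((A.filter fun a => a + s ∉ A).card : ℝ) := by
  have hd1 : (1:ℝ) < (d:ℝ) := by exact_mod_cast hd2
  have hlog4 : (0:ℝ) < Real.log 4 := Real.log_pos (by norm_num)
  set c4 : ℝ := ((d : ℝ)/((d : ℝ) - 1)) / Real.log 4 with hc4
  have hc4pos : 0 < c4 := div_pos (div_pos (by linarith) (by linarith)) hlog4
  set p : G → G ⧸ Submodule.span ℤ ({s} : Set G) := fun x => Submodule.Quotient.mk x with hp
  set B : Finset G := A.filter (fun a => a + s ∉ A) with hB
  have mapsA : ∀ a ∈ A, p a ∈ A.image p := fun a ha => Finset.mem_image_of_mem p ha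
  have mapsB : ∀ b ∈ B, p b ∈ A.image p := fun b hb =>
    Finset.mem_image_of_mem p (Finset.mem_filter.1 hb).1
  -- decompose all three quantities fiberwise
  have hcardA : A.card = ∑ c ∈ A.image p, (A.filter fun x => p x = c).card :=
    Finset.card_eq_sum_card_fiberwise mapsA
  have hcardB : B.card = ∑ c ∈ A.image p, (B.filter fun x => p x = c).card :=
    Finset.card_eq_sum_card_fiberwise mapsB
  have hsumlog : ∑ a ∈ A, Real.log (lineCard A s a)
      = ∑ c ∈ A.image p, ((A.filter fun x => p x = c).card : ℝ) *
          Real.log ((A.filter fun x => p x = c).card) := by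
    rw [← Finset.sum_fiberwise_of_maps_to mapsA (fun a => Real.log (lineCard A s a))]
    apply Finset.sum_congr rfl
    intro c hc
    rw [Finset.sum_congr rfl (fun a ha => ?_), Finset.sum_const, nsmul_eq_mul]
    have hpa : p a = c := (Finset.mem_filter.1 ha).2
    rw [lineCard_eq_fiber, ← hpa]
  rw [hcardA, hcardB, hsumlog]
  push_cast
  rw [Finset.mul_sum, ← Finset.sum_sub_distrib]
  apply Finset.sum_le_sum
  intro c hc
  set F : Finset G := A.filter fun x => p x = c with hF
  set m : ℕ := F.card with hm
  have hFne : F.Nonempty := by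
    obtain ⟨a, ha, rfl⟩ := Finset.mem_image.1 hc
    exact ⟨a, Finset.mem_filter.2 ⟨ha, rfl⟩⟩
  have hm1 : 1 ≤ m := Finset.card_pos.2 hFne
  by_cases hbd : (B.filter fun x => p x = c).card = 0
  · -- no boundary on this line: the fiber is closed under +s, hence has ≥ addOrderOf s points
    have hclosed : ∀ a ∈ F, a + s ∈ F := by
      intro a ha
      obtain ⟨haA, hpa⟩ := Finset.mem_filter.1 ha
      have haB : a + s ∈ A := by
        by_contra hns
        have : a ∈ B.filter fun x => p x = c :=
          Finset.mem_filter.2 ⟨Finset.mem_filter.2 ⟨haA, hns⟩, hpa⟩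
        exact absurd (Finset.card_eq_zero.1 hbd ▸ this) (Finset.notMem_empty a)
      refine Finset.mem_filter.2 ⟨haB, ?_⟩
      rw [← hpa]
      show Submodule.Quotient.mk (a + s) = Submodule.Quotient.mk a
      rw [Submodule.Quotient.eq]
      simpa using Submodule.mem_span_singleton_self s
    obtain ⟨a0, ha0⟩ := hFne
    have hiter : ∀ k : ℕ, a0 + k • s ∈ F := by
      intro k
      induction k with
      | zero => simpa using ha0
      | succ n ihn =>
        have h := hclosed _ ihn
        rw [succ_nsmul, ← add_assoc]
        exact h
    have hinj : Set.InjOn (fun k : ℕ => a0 + k • s) (Set.Iio (addOrderOf s)) := by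
      intro k hk l hl hkl
      have : k • s = l • s := by
        have := add_left_cancel hkl
        exact this
      exact nsmul_injOn_Iio_addOrderOf hk hl this
    have hrange : (Finset.range (addOrderOf s)).image (fun k => a0 + k • s) ⊆ F := by
      intro x hx
      obtain ⟨k, _, rfl⟩ := Finset.mem_image.1 hx
      exact hiter k
    have hcard : addOrderOf s ≤ m := by
      have := Finset.card_le_card hrange
      rwa [Finset.card_image_of_injOn (fun k hk l hl h =>
        hinj (by simpa using Finset.mem_range.1 hk) (by simpa using Finset.mem_range.1 hl) h),
        Finset.card_range] at this
    have hmd : (d:ℝ) ≤ (m:ℝ) := by exact_mod_cast le_trans hsd hcard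
    -- m - c4 * m log m ≤ 0
    have hman : (1:ℝ) ≤ c4 * Real.log m := by
      have hmono : Real.log (d:ℝ) ≤ Real.log (m:ℝ) :=
        Real.log_le_log (by positivity) hmd
      have h1 : ((d:ℝ) - 1) * Real.log 4 ≤ (d:ℝ) * Real.log m :=
        calc ((d:ℝ)-1) * Real.log 4 ≤ (d:ℝ) * Real.log d := key_log (by exact_mod_cast hd2)
          _ ≤ (d:ℝ) * Real.log m := mul_le_mul_of_nonneg_left hmono (by positivity)
      rw [hc4, div_div, div_mul_eq_mul_div,
        le_div_iff₀ (mul_pos (by linarith : (0:ℝ) < (d:ℝ)-1) hlog4)]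
      linarith
    have hm0 : (0:ℝ) ≤ (m:ℝ) := by positivity
    have : (m:ℝ) - c4 * ((m:ℝ) * Real.log m) ≤ 0 := by
      have := mul_le_mul_of_nonneg_left hman hm0
      nlinarith
    simp only [hbd]
    push_cast
    linarith
  · -- at least one boundary point on this line
    have hbd1 : (1:ℝ) ≤ ((B.filter fun x => p x = c).card : ℝ) := by
      have : 1 ≤ (B.filter fun x => p x = c).card := Nat.one_le_iff_ne_zero.2 hbd
      exact_mod_cast this
    rcases eq_or_lt_of_le hm1 with h1 | h2
    · rw [← h1]
      push_cast
      simp only [Real.log_one]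
      linarith
    · have hm2 : (2:ℝ) ≤ (m:ℝ) := by exact_mod_cast h2
      have hkey : ((m:ℝ) - 1) * Real.log 4 ≤ (m:ℝ) * Real.log m := key_log hm2
      have hc4ge : 1 / Real.log 4 ≤ c4 := by
        have hdd : (1:ℝ) ≤ (d:ℝ)/((d:ℝ)-1) := by
          rw [le_div_iff₀ (by linarith : (0:ℝ) < (d:ℝ)-1)]; linarith
        rw [hc4]
        gcongr
      have hlm : (0:ℝ) ≤ (m:ℝ) * Real.log m := by
        apply mul_nonneg (by positivity)
        apply Real.log_natCast_nonneg
      have h1 : (m:ℝ) - c4 * ((m:ℝ) * Real.log m) ≤ (m:ℝ) - (1/Real.log 4) * ((m:ℝ) * Real.log m) := by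
        nlinarith
      have h2' : (m:ℝ) - (1/Real.log 4) * ((m:ℝ) * Real.log m) ≤ 1 := by
        rw [sub_le_iff_le_add]
        rw [div_mul_eq_mul_div, one_mul]
        rw [← sub_le_iff_le_add']
        rw [le_div_iff₀ hlog4]
        nlinarith
      linarith


lemma edgeBoundary_eq (A S : Finset G) :
    edgeBoundary A S = ∑ s ∈ S, (A.filter fun a => a + s ∉ A).card := by
  unfold edgeBoundary
  rw [Finset.card_filter, Finset.sum_product, Finset.sum_comm]
  apply Finset.sum_congr rfl
  intro s _
  rw [Finset.card_filter]


end Aux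

/-- **Theorem 2 (general case, finite orders).** Let `A` and `S` be finite non-empty
subsets of an abelian group with `S` independent and all elements of `S` of finite order.
Write `n = |S|` and let `d = min{ord s : s ∈ S}`. If `∂_S(A) ≤ (1-γ)·n·|A|` with
`γ ∈ (0,1]`, then `|A| ≥ 4^{(1-1/d)·γ·n}`. -/
theorem isoperimetric_general_finite_order {G : Type*} [AddCommGroup G] [DecidableEq G]
    (S : Finset G) (hS : S.Nonempty) (hind : IsIndependent S)
    (hford : ∀ s ∈ S, IsOfFinAddOrder s)
    (d : ℕ) (hd_mem : ∃ s ∈ S, addOrderOf s = d) (hd_min : ∀ s ∈ S, d ≤ addOrderOf s)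
    (A : Finset G) (hA : A.Nonempty)
    (γ : ℝ) (hγ0 : 0 < γ) (hγ1 : γ ≤ 1)
    (hbd : (edgeBoundary A S : ℝ) ≤ (1 - γ) * S.card * A.card) :
    (4 : ℝ) ^ ((1 - 1 / (d : ℝ)) * γ * S.card) ≤ A.card := by
  have hA1 : 1 ≤ A.card := Finset.card_pos.2 hA
  have hApos : (0:ℝ) < A.card := by exact_mod_cast Finset.card_pos.2 hA
  have hd1 : 1 ≤ d := by
    obtain ⟨s0, hs0S, hs0⟩ := hd_mem
    have := (hford s0 hs0S).addOrderOf_pos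
    omega
  rcases eq_or_lt_of_le hd1 with h1 | hd2'
  · -- d = 1 : exponent is 0
    rw [← h1]
    have hz : ((1:ℝ) - 1 / ((1:ℕ):ℝ)) * γ * S.card = 0 := by norm_num
    rw [hz, Real.rpow_zero]
    exact_mod_cast hA1
  · have hd2 : 2 ≤ d := hd2'
    have hdR : (2:ℝ) ≤ (d:ℝ) := by exact_mod_cast hd2
    have hlog4 : (0:ℝ) < Real.log 4 := Real.log_pos (by norm_num)
    set c4 : ℝ := ((d : ℝ)/((d : ℝ) - 1)) / Real.log 4 with hc4
    have hc4pos : 0 < c4 := div_pos (div_pos (by linarith) (by linarith)) hlog4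
    set n : ℕ := S.card with hn
    -- sum the directional bounds
    have hmain : (n:ℝ) * A.card - c4 * (A.card * Real.log A.card) ≤ edgeBoundary A S := by
      have h1 : ∀ s ∈ S, (A.card : ℝ) - c4 * ∑ a ∈ A, Real.log (lineCard A s a)
          ≤ ((A.filter fun a => a + s ∉ A).card : ℝ) := fun s hsS =>
        dir_bound d hd2 (hford s hsS) (hd_min s hsS) A
      have h2 : ∑ s ∈ S, ((A.card : ℝ) - c4 * ∑ a ∈ A, Real.log (lineCard A s a))
          ≤ ∑ s ∈ S, ((A.filter fun a => a + s ∉ A).card : ℝ) := Finset.sum_le_sum h1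
      have h3 : ∑ s ∈ S, ((A.filter fun a => a + s ∉ A).card : ℝ) = (edgeBoundary A S : ℝ) := by
        rw [edgeBoundary_eq]
        push_cast
        rfl
      have h4 : ∑ s ∈ S, ((A.card : ℝ) - c4 * ∑ a ∈ A, Real.log (lineCard A s a))
          = (n:ℝ) * A.card - c4 * ∑ s ∈ S, ∑ a ∈ A, Real.log (lineCard A s a) := by
        rw [Finset.sum_sub_distrib, Finset.sum_const, ← Finset.mul_sum, nsmul_eq_mul]
      have h5 := han S hind A
      have h6 : c4 * ∑ s ∈ S, ∑ a ∈ A, Real.log (lineCard A s a)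
          ≤ c4 * (A.card * Real.log A.card) := by
        apply mul_le_mul_of_nonneg_left h5 (le_of_lt hc4pos)
      rw [h4] at h2
      rw [h3] at h2
      linarith
    -- combine with the hypothesis
    have hγn : γ * n * A.card ≤ c4 * (A.card * Real.log A.card) := by
      have : (1 - γ) * n * A.card = (n:ℝ) * A.card - γ * n * A.card := by ring
      linarith
    have hγn2 : γ * n ≤ c4 * Real.log A.card := by
      have h := hγn
      rw [show c4 * ((A.card:ℝ) * Real.log A.card) = (c4 * Real.log A.card) * A.card by ring] at h
      rw [show γ * (n:ℝ) * A.card = (γ * n) * A.card by ring] at h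
      exact le_of_mul_le_mul_right h hApos
    -- turn into the logarithmic form
    have hfact : c4 * (((d:ℝ)-1)/(d:ℝ) * Real.log 4) = 1 := by
      have h01 : ((d:ℝ)-1) ≠ 0 := by linarith
      have hd0 : (d:ℝ) ≠ 0 := by linarith
      rw [hc4]
      field_simp
    have hfrac : (1:ℝ) - 1/(d:ℝ) = ((d:ℝ)-1)/(d:ℝ) := by
      field_simp
    have htpos : (0:ℝ) ≤ ((d:ℝ)-1)/(d:ℝ) * Real.log 4 :=
      mul_nonneg (div_nonneg (by linarith) (by linarith)) hlog4.le
    have hlog : ((1:ℝ) - 1/(d:ℝ)) * γ * n * Real.log 4 ≤ Real.log A.card := by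
      have := mul_le_mul_of_nonneg_right hγn2 htpos
      calc ((1:ℝ) - 1/(d:ℝ)) * γ * n * Real.log 4
          = (γ * n) * (((d:ℝ)-1)/(d:ℝ) * Real.log 4) := by rw [hfrac]; ring
        _ ≤ (c4 * Real.log A.card) * (((d:ℝ)-1)/(d:ℝ) * Real.log 4) := this
        _ = Real.log A.card * (c4 * (((d:ℝ)-1)/(d:ℝ) * Real.log 4)) := by ring
        _ = Real.log A.card := by rw [hfact, mul_one]
    calc (4:ℝ) ^ ((1 - 1 / (d : ℝ)) * γ * S.card)
        = Real.exp (Real.log 4 * ((1 - 1 / (d : ℝ)) * γ * S.card)) :=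
          Real.rpow_def_of_pos (by norm_num) _
      _ ≤ Real.exp (Real.log A.card) := by
          apply Real.exp_le_exp.2
          calc Real.log 4 * ((1 - 1 / (d : ℝ)) * γ * S.card)
              = (1 - 1/(d:ℝ)) * γ * n * Real.log 4 := by rw [hn]; ring
            _ ≤ Real.log A.card := hlog
      _ = A.card := Real.exp_log hApos
end

section
/- Let A and S be finite non-empty subsets of an abelian group such that S is independent and every element of S has infinite order. Write n = |S|. If ∂_S(A) ≤ (1-γ)·n·|A| with a real γ ∈ (0,1], then |A| ≥ 4^{γ·n}. -/
namespace IsoAux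

open Finset
open scoped Classical

variable {α : Type*}

/-- The "fiber" (equivalence class) of `a` inside `A` under relation `r`. -/
noncomputable def fib (A : Finset α) (r : α → α → Prop) (a : α) : Finset α :=
  A.filter fun b => r b a

lemma mem_fib {A : Finset α} {r : α → α → Prop} {a b : α} :
    b ∈ fib A r a ↔ b ∈ A ∧ r b a := by
  simp [fib]

lemma fib_subset (A : Finset α) (r : α → α → Prop) (a : α) : fib A r a ⊆ A :=
  Finset.filter_subset _ _

lemma fib_congr {A : Finset α} {r : α → α → Prop} (hr : Equivalence r) {a b : α}
    (h : r a b) : fib A r a = fib A r b := by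
  ext c
  simp only [mem_fib]
  exact and_congr_right fun _ =>
    ⟨fun h' => hr.trans h' h, fun h' => hr.trans h' (hr.symm h)⟩

lemma self_mem_fib {A : Finset α} {r : α → α → Prop} (hr : Equivalence r) {a : α}
    (ha : a ∈ A) : a ∈ fib A r a := mem_fib.2 ⟨ha, hr.refl a⟩

lemma fib_card_pos {A : Finset α} {r : α → α → Prop} (hr : Equivalence r) {a : α}
    (ha : a ∈ A) : 0 < (fib A r a).card :=
  Finset.card_pos.2 ⟨a, self_mem_fib hr ha⟩

/-- The entropy-like quantity `∑_{a ∈ A} log |class of a|`. -/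
noncomputable def phi (A : Finset α) (r : α → α → Prop) : ℝ :=
  ∑ a ∈ A, Real.log ((fib A r a).card)

lemma phi_nonneg (A : Finset α) (r : α → α → Prop) (hr : Equivalence r) :
    0 ≤ phi A r :=
  Finset.sum_nonneg fun a ha => Real.log_nonneg (by exact_mod_cast fib_card_pos hr ha)

/-- The set of equivalence classes. -/
noncomputable def classes (A : Finset α) (r : α → α → Prop) : Finset (Finset α) :=
  A.image fun a => fib A r a

lemma mem_classes {A : Finset α} {r : α → α → Prop} {F : Finset α} :
    F ∈ classes A r ↔ ∃ a ∈ A, fib A r a = F := by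
  simp [classes]

lemma filter_fib_eq {A : Finset α} {r : α → α → Prop} (hr : Equivalence r) {F : Finset α}
    (hF : F ∈ classes A r) :
    A.filter (fun a => fib A r a = F) = F := by
  obtain ⟨a₀, ha₀, rfl⟩ := mem_classes.1 hF
  ext x
  simp only [Finset.mem_filter]
  constructor
  · rintro ⟨hx, hfx⟩
    exact hfx ▸ self_mem_fib hr hx
  · intro hx
    obtain ⟨hxA, hrx⟩ := mem_fib.1 hx
    exact ⟨hxA, fib_congr hr hrx⟩

lemma sum_classes (A : Finset α) (r : α → α → Prop) (hr : Equivalence r) (g : α → ℝ) :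
    ∑ a ∈ A, g a = ∑ F ∈ classes A r, ∑ a ∈ F, g a := by
  have h := Finset.sum_fiberwise_of_maps_to (g := fun a => fib A r a)
    (t := classes A r) (fun a ha => mem_classes.2 ⟨a, ha, rfl⟩) g
  rw [← h]
  exact Finset.sum_congr rfl fun F hF => by rw [filter_fib_eq hr hF]

lemma fib_eq_of_mem_class {A : Finset α} {r : α → α → Prop} (hr : Equivalence r)
    {F : Finset α} (hF : F ∈ classes A r) {a : α} (ha : a ∈ F) :
    fib A r a = F := by
  obtain ⟨a₀, ha₀, rfl⟩ := mem_classes.1 hF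
  exact fib_congr hr (mem_fib.1 ha).2

lemma phi_eq_sum_classes (A : Finset α) (r : α → α → Prop) (hr : Equivalence r) :
    phi A r = ∑ F ∈ classes A r, (F.card : ℝ) * Real.log F.card := by
  rw [phi, sum_classes A r hr]
  refine Finset.sum_congr rfl fun F hF => ?_
  rw [Finset.sum_congr rfl (fun a ha => by rw [fib_eq_of_mem_class hr hF ha]),
    Finset.sum_const, nsmul_eq_mul]

lemma card_eq_sum_classes (A : Finset α) (r : α → α → Prop) (hr : Equivalence r) :
    (A.card : ℝ) = ∑ F ∈ classes A r, (F.card : ℝ) := by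
  have h := sum_classes A r hr (fun _ => (1 : ℝ))
  simpa using h

/-- Jensen step: if the weights are at least 1 and sum to at most `|A|²`, then the sum of
their logs is at most `|A| log |A|`. -/
lemma sum_log_le (A : Finset α) (w : α → ℝ) (hw : ∀ a ∈ A, 1 ≤ w a)
    (hsum : ∑ a ∈ A, w a ≤ (A.card : ℝ) ^ 2) :
    ∑ a ∈ A, Real.log (w a) ≤ A.card * Real.log A.card := by
  rcases A.eq_empty_or_nonempty with rfl | hA
  · simp
  have hN : (0 : ℝ) < A.card := by exact_mod_cast Finset.card_pos.2 hA
  have hjensen := strictConcaveOn_log_Ioi.concaveOn.le_map_sum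
    (t := A) (w := fun _ => (A.card : ℝ)⁻¹) (p := w)
    (fun i _ => by positivity)
    (by rw [Finset.sum_const, nsmul_eq_mul]; field_simp)
    (fun i hi => Set.mem_Ioi.2 (lt_of_lt_of_le one_pos (hw i hi)))
  have h1 : ∑ i ∈ A, (A.card : ℝ)⁻¹ • w i ≤ (A.card : ℝ) := by
    simp only [smul_eq_mul, ← Finset.mul_sum]
    rw [inv_mul_le_iff₀ hN]
    calc ∑ a ∈ A, w a ≤ (A.card : ℝ) ^ 2 := hsum
      _ = (A.card : ℝ) * A.card := sq (A.card : ℝ) ▸ by ring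
  have h2 : Real.log (∑ i ∈ A, (A.card : ℝ)⁻¹ • w i) ≤ Real.log A.card := by
    apply Real.log_le_log _ h1
    have : (0:ℝ) < ∑ i ∈ A, (A.card : ℝ)⁻¹ • w i := by
      apply Finset.sum_pos (fun i hi => ?_) hA
      have := hw i hi; simp only [smul_eq_mul]; positivity
    exact this
  have h3 : ∑ i ∈ A, (A.card : ℝ)⁻¹ • Real.log (w i) ≤ Real.log A.card :=
    le_trans hjensen h2
  have h4 : ∑ a ∈ A, Real.log (w a)
      = (A.card : ℝ) * ∑ i ∈ A, (A.card : ℝ)⁻¹ • Real.log (w i) := by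
    simp only [smul_eq_mul, ← Finset.mul_sum]
    field_simp
  rw [h4]
  exact mul_le_mul_of_nonneg_left h3 hN.le

/-- Core subadditivity (Jensen) step: if the pair of relations separates points of `A`,
then `phi A r + phi A s ≤ |A| log |A|`. -/
lemma phi_add_phi_le (A : Finset α) (r s : α → α → Prop)
    (hr : Equivalence r) (hs : Equivalence s)
    (hinj : ∀ a ∈ A, ∀ b ∈ A, r a b → s a b → a = b) :
    phi A r + phi A s ≤ A.card * Real.log A.card := by
  have hcount : ∑ a ∈ A, ((fib A r a).card * (fib A s a).card) ≤ A.card ^ 2 := by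
    have hdisj : ∀ a ∈ A, ∀ b ∈ A, a ≠ b →
        Disjoint (fib A r a ×ˢ fib A s a) (fib A r b ×ˢ fib A s b) := by
      intro a ha b hb hab
      rw [Finset.disjoint_left]
      rintro ⟨x, y⟩ hxa hxb
      simp only [Finset.mem_product, mem_fib] at hxa hxb
      exact hab (hinj a ha b hb (hr.trans (hr.symm hxa.1.2) hxb.1.2)
        (hs.trans (hs.symm hxa.2.2) hxb.2.2))
    calc ∑ a ∈ A, ((fib A r a).card * (fib A s a).card)
        = ∑ a ∈ A, (fib A r a ×ˢ fib A s a).card := by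
          simp [Finset.card_product]
      _ = (A.biUnion fun a => fib A r a ×ˢ fib A s a).card :=
          (Finset.card_biUnion hdisj).symm
      _ ≤ (A ×ˢ A).card := Finset.card_le_card (by
          intro p hp
          simp only [Finset.mem_biUnion] at hp
          obtain ⟨a, _, hp⟩ := hp
          simp only [Finset.mem_product, mem_fib] at hp ⊢
          exact ⟨hp.1.1, hp.2.1⟩)
      _ = A.card ^ 2 := by rw [Finset.card_product, sq]
  have key := sum_log_le A (fun a => (((fib A r a).card * (fib A s a).card : ℕ) : ℝ))
    (fun a ha => by
      have h1 := fib_card_pos hr ha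
      have h2 := fib_card_pos hs ha
      have h3 : 1 ≤ (fib A r a).card * (fib A s a).card := Nat.mul_pos h1 h2
      show (1 : ℝ) ≤ (((fib A r a).card * (fib A s a).card : ℕ) : ℝ)
      exact_mod_cast h3)
    (by exact_mod_cast hcount)
  rw [phi, phi, ← Finset.sum_add_distrib]
  refine le_trans (le_of_eq (Finset.sum_congr rfl fun a ha => ?_)) key
  have h1 := fib_card_pos hr ha
  have h2 := fib_card_pos hs ha
  simp only [Nat.cast_mul]
  rw [Real.log_mul (by exact_mod_cast h1.ne') (by exact_mod_cast h2.ne')]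

/-- Superadditivity of `phi` over a coarser relation `w`. -/
lemma phi_superadd (A : Finset α) (r s w : α → α → Prop)
    (hr : Equivalence r) (hs : Equivalence s) (hw : Equivalence w)
    (hrw : ∀ a b, r a b → w a b) (hsw : ∀ a b, s a b → w a b)
    (hinj : ∀ a b, r a b → s a b → a = b) :
    phi A r + phi A s ≤ phi A w := by
  have hfib : ∀ (u : α → α → Prop), (∀ a b, u a b → w a b) →
      ∀ F ∈ classes A w, ∀ a ∈ F, fib A u a = fib F u a := by
    intro u huw F hF a haF
    have hFa : fib A w a = F := fib_eq_of_mem_class hw hF haF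
    ext b
    simp only [mem_fib]
    constructor
    · rintro ⟨hbA, hub⟩
      have hbF : b ∈ F := by
        rw [← hFa]; exact mem_fib.2 ⟨hbA, huw _ _ hub⟩
      exact ⟨hbF, hub⟩
    · rintro ⟨hbF, hub⟩
      have hbfib : b ∈ fib A w a := by rw [hFa]; exact hbF
      exact ⟨(mem_fib.1 hbfib).1, hub⟩
  rw [phi, phi, sum_classes A w hw (fun a => Real.log ((fib A r a).card)),
    sum_classes A w hw (fun a => Real.log ((fib A s a).card)),
    phi_eq_sum_classes A w hw, ← Finset.sum_add_distrib]
  refine Finset.sum_le_sum fun F hF => ?_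
  have h1 : ∑ a ∈ F, Real.log ((fib A r a).card) = phi F r :=
    Finset.sum_congr rfl fun a ha => by rw [hfib r hrw F hF a ha]
  have h2 : ∑ a ∈ F, Real.log ((fib A s a).card) = phi F s :=
    Finset.sum_congr rfl fun a ha => by rw [hfib s hsw F hF a ha]
  rw [h1, h2]
  exact phi_add_phi_le F r s hr hs (fun a _ b _ hra hsa => hinj a b hra hsa)

lemma phi_le (A : Finset α) (r : α → α → Prop) (hr : Equivalence r) :
    phi A r ≤ A.card * Real.log A.card := by
  rw [phi]
  calc ∑ a ∈ A, Real.log ((fib A r a).card)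
      ≤ ∑ a ∈ A, Real.log (A.card) := by
        refine Finset.sum_le_sum fun a ha => Real.log_le_log ?_ ?_
        · exact_mod_cast fib_card_pos hr ha
        · exact_mod_cast Finset.card_le_card (fib_subset A r a)
    _ = A.card * Real.log A.card := by rw [Finset.sum_const, nsmul_eq_mul]

/-- Pointwise numeric inequality: `2 log 2 (n-1) ≤ n log n` for natural `n ≥ 1`. -/
lemma nat_log_ineq (n : ℕ) (hn : 1 ≤ n) :
    2 * Real.log 2 * ((n : ℝ) - 1) ≤ (n : ℝ) * Real.log n := by
  have hlog4 : Real.log 4 = 2 * Real.log 2 := by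
    rw [show (4 : ℝ) = 2 ^ 2 by norm_num, Real.log_pow]; push_cast; ring
  by_cases h1 : n = 1
  · subst h1; simp
  by_cases h2 : n = 2
  · subst h2; norm_num
  by_cases h3 : n = 3
  · subst h3
    have h16 : Real.log 16 ≤ Real.log 27 := Real.log_le_log (by norm_num) (by norm_num)
    have e1 : Real.log 16 = 4 * Real.log 2 := by
      rw [show (16 : ℝ) = 2 ^ 4 by norm_num, Real.log_pow]; push_cast; ring
    have e2 : Real.log 27 = 3 * Real.log 3 := by
      rw [show (27 : ℝ) = 3 ^ 3 by norm_num, Real.log_pow]; push_cast; ring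
    push_cast
    nlinarith [h16]
  have hn4 : (4 : ℝ) ≤ (n : ℝ) := by
    have : 4 ≤ n := by omega
    exact_mod_cast this
  have hlogn : 2 * Real.log 2 ≤ Real.log n := by
    rw [← hlog4]
    exact Real.log_le_log (by norm_num) hn4
  have hL : 0 ≤ 2 * Real.log 2 := by positivity
  have hn0 : (0 : ℝ) ≤ (n : ℝ) := by positivity
  calc 2 * Real.log 2 * ((n : ℝ) - 1) ≤ 2 * Real.log 2 * (n : ℝ) :=
        mul_le_mul_of_nonneg_left (by linarith) hL
    _ = (n : ℝ) * (2 * Real.log 2) := by ring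
    _ ≤ (n : ℝ) * Real.log n := mul_le_mul_of_nonneg_left hlogn hn0

section Group

variable {G : Type*} [AddCommGroup G] [DecidableEq G]

/-- The relation "congruent modulo the subgroup generated by `T`". -/
def rel (T : Finset G) : G → G → Prop :=
  fun a b => a - b ∈ AddSubgroup.closure (T : Set G)

lemma rel_equiv (T : Finset G) : Equivalence (rel T) where
  refl a := by
    simp only [rel, sub_self]
    exact zero_mem _
  symm {a b} h := by
    have h' := neg_mem h
    rwa [neg_sub] at h'
  trans {a b c} h1 h2 := by
    have h' := add_mem h1 h2
    rwa [sub_add_sub_cancel] at h'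

lemma mem_closure_finset {T : Finset G} {x : G}
    (hx : x ∈ AddSubgroup.closure (T : Set G)) :
    ∃ k : G → ℤ, ∑ t ∈ T, k t • t = x := by
  rw [← Submodule.span_int_eq_addSubgroupClosure, Submodule.mem_toAddSubgroup] at hx
  exact (Submodule.mem_span_finset.1 hx).imp fun _ h => h.2

lemma disjoint_closure {S : Finset G} (hind : IsIndependent S) {T : Finset G} {s : G}
    (hsS : s ∈ S) (hTS : T ⊆ S) (hsT : s ∉ T) {x : G}
    (hxT : x ∈ AddSubgroup.closure (T : Set G))
    (hxs : x ∈ AddSubgroup.closure ({s} : Set G)) : x = 0 := by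
  obtain ⟨c, hc⟩ := AddSubgroup.mem_closure_singleton.1 hxs
  obtain ⟨k, hk⟩ := mem_closure_finset hxT
  set k' : G → ℤ := fun u => if u = s then -c else if u ∈ T then k u else 0 with hk'
  have hsub : insert s T ⊆ S := Finset.insert_subset hsS hTS
  have hsum : ∑ u ∈ S, k' u • u = 0 := by
    rw [← Finset.sum_subset hsub (fun u _ hnot => ?_)]
    · rw [Finset.sum_insert hsT]
      have hT : ∑ t ∈ T, k' t • t = ∑ t ∈ T, k t • t := by
        refine Finset.sum_congr rfl fun t ht => ?_
        have hts : t ≠ s := fun h => hsT (h ▸ ht)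
        simp [k', hts, ht]
      rw [hT, hk]
      simp only [k', if_pos rfl]
      rw [neg_zsmul, hc]
      exact neg_add_cancel x
    · have hus : u ≠ s := fun h => hnot (h ▸ Finset.mem_insert_self s T)
      have huT : u ∉ T := fun h => hnot (Finset.mem_insert_of_mem h)
      simp [k', hus, huT]
  have hz := hind k' hsum s hsS
  simp only [k', if_pos rfl, neg_zsmul, neg_eq_zero] at hz
  rw [← hc, hz]

lemma rel_singleton {s a b : G} :
    rel ({s} : Finset G) a b ↔ a - b ∈ AddSubgroup.closure ({s} : Set G) := by
  simp [rel]

lemma exists_boundary {s : G} (hs : ¬ IsOfFinAddOrder s) {A : Finset G} {a : G}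
    (ha : a ∈ A) :
    ∃ x ∈ A, rel ({s} : Finset G) x a ∧ x + s ∉ A := by
  have hzs : ∀ n : ℤ, n • s = 0 → n = 0 := fun n hn => by
    by_contra h
    exact hs (isOfFinAddOrder_iff_zsmul_eq_zero.2 ⟨n, h, hn⟩)
  set F := fib A (rel ({s} : Finset G)) a with hF
  have haF : a ∈ F := self_mem_fib (rel_equiv _) ha
  set f : G → ℤ := fun x => if h : ∃ k : ℤ, k • s = x - a then h.choose else 0 with hf
  have hfspec : ∀ x ∈ F, f x • s = x - a := by
    intro x hx
    obtain ⟨-, hrx⟩ := mem_fib.1 hx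
    obtain ⟨k, hk⟩ := AddSubgroup.mem_closure_singleton.1 (rel_singleton.1 hrx)
    have hex : ∃ k : ℤ, k • s = x - a := ⟨k, hk⟩
    rw [hf]
    simp only [dif_pos hex]
    exact hex.choose_spec
  obtain ⟨x₀, hx₀F, hmax⟩ := F.exists_max_image f ⟨a, haF⟩
  refine ⟨x₀, (fib_subset _ _ _) hx₀F, (mem_fib.1 hx₀F).2, fun hmem => ?_⟩
  have hxF : x₀ + s ∈ F := by
    refine mem_fib.2 ⟨hmem, rel_singleton.2 ?_⟩
    have h1 := rel_singleton.1 (mem_fib.1 hx₀F).2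
    rw [add_sub_right_comm]
    exact add_mem h1 (AddSubgroup.mem_closure_singleton.2 ⟨1, one_zsmul s⟩)
  have h1 : f (x₀ + s) • s = (f x₀ + 1) • s := by
    rw [hfspec _ hxF, add_zsmul, one_zsmul, hfspec _ hx₀F]
    abel
  have h2 : f (x₀ + s) = f x₀ + 1 := by
    have h0 := hzs (f (x₀ + s) - (f x₀ + 1)) (by rw [sub_zsmul, h1]; simp)
    omega
  have h3 := hmax _ hxF
  omega

lemma dir_bound {s : G} (hs : ¬ IsOfFinAddOrder s) (A : Finset G) :
    2 * Real.log 2 * ((A.card : ℝ) - ((A.filter fun a => a + s ∉ A).card : ℝ))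
      ≤ phi A (rel ({s} : Finset G)) := by
  set r := rel ({s} : Finset G) with hrdef
  have hr : Equivalence r := rel_equiv _
  have hphi := phi_eq_sum_classes A r hr
  have hcard := card_eq_sum_classes A r hr
  set C := classes A r with hC
  have hclass : C.card ≤ (A.filter fun a => a + s ∉ A).card := by
    apply Finset.card_le_card_of_surjOn (fun x => fib A r x)
    intro F hF
    obtain ⟨a₀, ha₀, rfl⟩ := mem_classes.1 (by exact_mod_cast hF)
    obtain ⟨x, hxA, hrx, hxb⟩ := exists_boundary hs ha₀
    refine ⟨x, ?_, fib_congr hr hrx⟩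
    simp only [Finset.coe_filter, Set.mem_setOf_eq]
    exact ⟨hxA, hxb⟩
  have hF1 : ∀ F ∈ C, 1 ≤ F.card := by
    intro F hF
    obtain ⟨a₀, ha₀, rfl⟩ := mem_classes.1 hF
    exact fib_card_pos hr ha₀
  have step1 : 2 * Real.log 2 * ((A.card : ℝ) - (C.card : ℝ))
      ≤ ∑ F ∈ C, (F.card : ℝ) * Real.log F.card := by
    have heq : (A.card : ℝ) - (C.card : ℝ) = ∑ F ∈ C, ((F.card : ℝ) - 1) := by
      rw [Finset.sum_sub_distrib, ← hcard, Finset.sum_const, nsmul_eq_mul, mul_one]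
    rw [heq, Finset.mul_sum]
    exact Finset.sum_le_sum fun F hF => nat_log_ineq F.card (hF1 F hF)
  have hmono : (A.card : ℝ) - ((A.filter fun a => a + s ∉ A).card : ℝ)
      ≤ (A.card : ℝ) - (C.card : ℝ) := by
    have : (C.card : ℝ) ≤ ((A.filter fun a => a + s ∉ A).card : ℝ) := by exact_mod_cast hclass
    linarith
  calc 2 * Real.log 2 * ((A.card : ℝ) - ((A.filter fun a => a + s ∉ A).card : ℝ))
      ≤ 2 * Real.log 2 * ((A.card : ℝ) - (C.card : ℝ)) :=
        mul_le_mul_of_nonneg_left hmono (by positivity)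
    _ ≤ ∑ F ∈ C, (F.card : ℝ) * Real.log F.card := step1
    _ = phi A r := hphi.symm

lemma sum_phi_le {S : Finset G} (hind : IsIndependent S) (A : Finset G) :
    ∀ T : Finset G, T ⊆ S →
      ∑ s ∈ T, phi A (rel ({s} : Finset G)) ≤ phi A (rel T) := by
  intro T
  induction T using Finset.induction_on with
  | empty =>
      intro _
      rw [Finset.sum_empty]
      exact phi_nonneg A _ (rel_equiv _)
  | @insert s T hsT ih =>
      intro hsub
      have hTS : T ⊆ S := (Finset.subset_insert _ _).trans hsub
      have hsS : s ∈ S := hsub (Finset.mem_insert_self _ _)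
      rw [Finset.sum_insert hsT]
      have hIH := ih hTS
      have hmono1 : ∀ a b : G, rel ({s} : Finset G) a b → rel (insert s T) a b := by
        intro a b h
        exact AddSubgroup.closure_mono (by simp) h
      have hmono2 : ∀ a b : G, rel T a b → rel (insert s T) a b := by
        intro a b h
        refine AddSubgroup.closure_mono ?_ h
        simp only [Finset.coe_insert]
        exact Set.subset_insert _ _
      have hinj : ∀ a b : G, rel ({s} : Finset G) a b → rel T a b → a = b := by
        intro a b h1 h2
        have h0 := disjoint_closure hind hsS hTS hsT h2 (rel_singleton.1 h1)
        exact sub_eq_zero.1 h0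
      have hsup := phi_superadd A (rel ({s} : Finset G)) (rel T) (rel (insert s T))
        (rel_equiv _) (rel_equiv _) (rel_equiv _) hmono1 hmono2 hinj
      linarith

lemma edgeBoundary_eq_sum (A S : Finset G) :
    edgeBoundary A S = ∑ s ∈ S, (A.filter fun a => a + s ∉ A).card := by
  rw [edgeBoundary, Finset.card_filter, Finset.sum_product, Finset.sum_comm]
  exact Finset.sum_congr rfl fun s _ => (Finset.card_filter _ _).symm

end Group

end IsoAux

/-- **Theorem 2 (general case, infinite orders).** Let `A` and `S` be finite non-empty
subsets of an abelian group with `S` independent and all elements of `S` of infinite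
order. Write `n = |S|`. If `∂_S(A) ≤ (1-γ)·n·|A|` with `γ ∈ (0,1]`, then
`|A| ≥ 4^{γ·n}`. -/
theorem isoperimetric_general_infinite_order {G : Type*} [AddCommGroup G] [DecidableEq G]
    (S : Finset G) (hS : S.Nonempty) (hind : IsIndependent S)
    (hord : ∀ s ∈ S, ¬ IsOfFinAddOrder s)
    (A : Finset G) (hA : A.Nonempty)
    (γ : ℝ) (hγ0 : 0 < γ) (hγ1 : γ ≤ 1)
    (hbd : (edgeBoundary A S : ℝ) ≤ (1 - γ) * S.card * A.card) :
    (4 : ℝ) ^ (γ * S.card) ≤ A.card := by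
  classical
  have hm0 : (0 : ℝ) < A.card := by exact_mod_cast Finset.card_pos.2 hA
  have hL : (0 : ℝ) < Real.log 2 := Real.log_pos (by norm_num)
  -- the key inequality
  have hsum : ∑ s ∈ S, 2 * Real.log 2 *
      ((A.card : ℝ) - ((A.filter fun a => a + s ∉ A).card : ℝ))
      ≤ (A.card : ℝ) * Real.log A.card :=
    calc ∑ s ∈ S, 2 * Real.log 2 *
          ((A.card : ℝ) - ((A.filter fun a => a + s ∉ A).card : ℝ))
        ≤ ∑ s ∈ S, IsoAux.phi A (IsoAux.rel ({s} : Finset G)) :=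
          Finset.sum_le_sum fun s hsS => IsoAux.dir_bound (hord s hsS) A
      _ ≤ IsoAux.phi A (IsoAux.rel S) := IsoAux.sum_phi_le hind A S le_rfl
      _ ≤ (A.card : ℝ) * Real.log A.card := IsoAux.phi_le A _ (IsoAux.rel_equiv S)
  have hEB : (edgeBoundary A S : ℝ)
      = ∑ s ∈ S, ((A.filter fun a => a + s ∉ A).card : ℝ) := by
    rw [IsoAux.edgeBoundary_eq_sum A S]
    push_cast
    rfl
  have hLHS : ∑ s ∈ S, 2 * Real.log 2 *
      ((A.card : ℝ) - ((A.filter fun a => a + s ∉ A).card : ℝ))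
      = 2 * Real.log 2 * ((S.card : ℝ) * A.card - edgeBoundary A S) := by
    rw [← Finset.mul_sum, Finset.sum_sub_distrib, Finset.sum_const, nsmul_eq_mul, hEB]
  rw [hLHS] at hsum
  have hgam : γ * S.card * A.card ≤ (S.card : ℝ) * A.card - edgeBoundary A S := by
    nlinarith [hbd]
  have hstep : 2 * Real.log 2 * (γ * S.card * A.card) ≤ (A.card : ℝ) * Real.log A.card :=
    le_trans (mul_le_mul_of_nonneg_left hgam (by positivity)) hsum
  have hlog : 2 * Real.log 2 * (γ * S.card) ≤ Real.log A.card := by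
    have h' : (2 * Real.log 2 * (γ * S.card)) * A.card ≤ Real.log A.card * A.card := by
      nlinarith [hstep]
    exact le_of_mul_le_mul_right h' hm0
  have h4 : (4 : ℝ) ^ (γ * (S.card : ℝ)) = Real.exp ((γ * S.card) * (2 * Real.log 2)) := by
    rw [Real.rpow_def_of_pos (by norm_num : (0:ℝ) < 4)]
    congr 1
    rw [show (4 : ℝ) = 2 ^ 2 by norm_num, Real.log_pow]
    push_cast
    ring
  rw [h4]
  calc Real.exp ((γ * S.card) * (2 * Real.log 2)) ≤ Real.exp (Real.log A.card) :=
        Real.exp_le_exp.2 (by linarith [hlog])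
    _ = A.card := Real.exp_log hm0
end

section
/- If n ≥ 1 is an integer and A ⊆ ℤ_{≥0}^n is a finite non-empty downset, then (1/|A|) · Σ_{a∈A} w(a) ≤ (1/2) · log₂|A|. -/
/-- The weight of a vector: the number of its non-zero coordinates. -/
def weight {n : ℕ} (a : Fin n → ℕ) : ℕ :=
  (Finset.univ.filter (fun i => a i ≠ 0)).card

open Real

lemma logR1 {x : ℝ} (hx : 0 < x) (hx2 : x ≤ 1/2) :
    2 * (1 - x) * Real.log 2 ≤ - Real.log x := by
  have h1 : Real.log (2*x) ≤ 2*x - 1 := Real.log_le_sub_one_of_pos (by linarith)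
  have h2 : Real.log (2*x) = Real.log 2 + Real.log x := by
    rw [Real.log_mul (by norm_num) (ne_of_gt hx)]
  have h3 : Real.log 2 < 0.6931471808 := Real.log_two_lt_d9
  have h4 : (0:ℝ) < Real.log 2 := Real.log_pos (by norm_num)
  nlinarith [mul_nonneg (by linarith : (0:ℝ) ≤ 1 - 2*x) (by linarith : (0:ℝ) ≤ 1 - Real.log 2)]

lemma logR2 {x : ℝ} (hx : 1/2 ≤ x) (hx1 : x < 1) :
    2 * (1 - x) * Real.log 2 ≤ -(x * Real.log x) - (1 - x) * Real.log (1 - x) := by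
  have hx0 : 0 < x := by linarith
  have hy0 : 0 < 1 - x := by linarith
  have h4 : (0:ℝ) < Real.log 2 := Real.log_pos (by norm_num)
  rcases le_or_gt x (3/4) with h | h
  · have h1 : Real.log (2*x) ≤ 2*x - 1 := Real.log_le_sub_one_of_pos (by linarith)
    have h2 : Real.log (2*(1-x)) ≤ 2*(1-x) - 1 := Real.log_le_sub_one_of_pos (by linarith)
    rw [Real.log_mul (by norm_num) (ne_of_gt hx0)] at h1
    rw [Real.log_mul (by norm_num) (ne_of_gt hy0)] at h2
    -- -log x ≥ log2 + 1 - 2x ;  -log(1-x) ≥ log2 - 1 + 2x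
    have e1 : x * (Real.log 2 + 1 - 2*x) ≤ x * (- Real.log x) :=
      mul_le_mul_of_nonneg_left (by linarith) hx0.le
    have e2 : (1-x) * (Real.log 2 - 1 + 2*x) ≤ (1-x) * (- Real.log (1-x)) :=
      mul_le_mul_of_nonneg_left (by linarith) hy0.le
    have h3 : 0.6931471803 < Real.log 2 := Real.log_two_gt_d9
    nlinarith [mul_nonneg (by linarith : (0:ℝ) ≤ 2*x - 1) (by linarith : (0:ℝ) ≤ Real.log 2 - (2*x - 1))]
  · have h1 : Real.log x ≤ x - 1 := Real.log_le_sub_one_of_pos hx0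
    have h2 : Real.log (1-x) ≤ Real.log (1/4) := Real.log_le_log hy0 (by linarith)
    have h3 : Real.log (1/4) = -(2 * Real.log 2) := by
      rw [show (1:ℝ)/4 = (2:ℝ)^(-2 : ℤ) by norm_num, Real.log_zpow]
      push_cast; ring
    have e1 : x * (1 - x) ≤ x * (- Real.log x) :=
      mul_le_mul_of_nonneg_left (by linarith) hx0.le
    have e2 : (1-x) * (2 * Real.log 2) ≤ (1-x) * (- Real.log (1-x)) :=
      mul_le_mul_of_nonneg_left (by linarith) hy0.le
    nlinarith [mul_nonneg hx0.le hy0.le]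

lemma KL (s : Finset ℕ) (a : ℕ → ℝ) (ha : ∀ i ∈ s, 1 ≤ a i)
    (hi0 : 0 ∈ s) (hmax : ∀ i ∈ s, a i ≤ a 0) :
    (∑ i ∈ s, a i * Real.log (a i)) + 2 * ((∑ i ∈ s, a i) - a 0) * Real.log 2 ≤
      (∑ i ∈ s, a i) * Real.log (∑ i ∈ s, a i) := by
  set S := ∑ i ∈ s, a i with hS
  have ha0 : 1 ≤ a 0 := ha 0 hi0
  have hnn : ∀ i ∈ s, 0 ≤ a i := fun i hi => le_trans zero_le_one (ha i hi)
  have hSa : a 0 ≤ S := Finset.single_le_sum hnn hi0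
  have hS0 : (0:ℝ) < S := by linarith
  have ha00 : (0:ℝ) < a 0 := by linarith
  have hrest : ∑ i ∈ s.erase 0, a i = S - a 0 := by
    rw [hS, ← Finset.add_sum_erase s a hi0]; ring
  have hlogS : Real.log (a 0 / S) = Real.log (a 0) - Real.log S :=
    Real.log_div (ne_of_gt ha00) (ne_of_gt hS0)
  rcases le_or_gt (2 * a 0) S with hc | hc
  · -- a 0 ≤ S/2
    have hsum1 : ∑ i ∈ s, a i * Real.log (a i) ≤ S * Real.log (a 0) := by
      calc ∑ i ∈ s, a i * Real.log (a i) ≤ ∑ i ∈ s, a i * Real.log (a 0) := by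
            refine Finset.sum_le_sum fun i hi => ?_
            exact mul_le_mul_of_nonneg_left
              (Real.log_le_log (by linarith [ha i hi]) (hmax i hi)) (hnn i hi)
        _ = S * Real.log (a 0) := by rw [← Finset.sum_mul]
    have hx0 : 0 < a 0 / S := div_pos ha00 hS0
    have hx2 : a 0 / S ≤ 1/2 := by rw [div_le_iff₀ hS0]; linarith
    have h := logR1 hx0 hx2
    have key : 2 * (S - a 0) * Real.log 2 ≤ S * Real.log S - S * Real.log (a 0) := by
      have h' := mul_le_mul_of_nonneg_left h hS0.le
      calc 2 * (S - a 0) * Real.log 2 = S * (2 * (1 - a 0 / S) * Real.log 2) := by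
            field_simp
        _ ≤ S * (- Real.log (a 0 / S)) := h'
        _ = S * Real.log S - S * Real.log (a 0) := by rw [hlogS]; ring
    linarith
  · rcases (s.erase 0).eq_empty_or_nonempty with he | he
    · have hone : S = a 0 := by
        have := hrest; rw [he, Finset.sum_empty] at this; linarith
      have hsplit : ∑ i ∈ s, a i * Real.log (a i) = a 0 * Real.log (a 0) := by
        rw [← Finset.add_sum_erase s _ hi0, he, Finset.sum_empty, add_zero]
      rw [hsplit, hone]; ring_nf; rfl
    · obtain ⟨j, hj⟩ := he
      have hj1 : 1 ≤ a j := ha j (Finset.mem_of_mem_erase hj)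
      have hres1 : 1 ≤ S - a 0 := by
        rw [← hrest]
        calc (1:ℝ) ≤ a j := hj1
          _ ≤ _ := Finset.single_le_sum (fun i hi => hnn i (Finset.mem_of_mem_erase hi)) hj
      have hbound : ∀ i ∈ s.erase 0, a i ≤ S - a 0 := by
        intro i hi
        rw [← hrest]
        exact Finset.single_le_sum (fun k hk => hnn k (Finset.mem_of_mem_erase hk)) hi
      have hsum2 : ∑ i ∈ s.erase 0, a i * Real.log (a i) ≤ (S - a 0) * Real.log (S - a 0) := by
        calc ∑ i ∈ s.erase 0, a i * Real.log (a i)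
            ≤ ∑ i ∈ s.erase 0, a i * Real.log (S - a 0) := by
              refine Finset.sum_le_sum fun i hi => ?_
              exact mul_le_mul_of_nonneg_left
                (Real.log_le_log (by linarith [ha i (Finset.mem_of_mem_erase hi)]) (hbound i hi))
                (hnn i (Finset.mem_of_mem_erase hi))
          _ = (S - a 0) * Real.log (S - a 0) := by rw [← Finset.sum_mul, hrest]
      have hsplit : ∑ i ∈ s, a i * Real.log (a i)
          = a 0 * Real.log (a 0) + ∑ i ∈ s.erase 0, a i * Real.log (a i) := by
        exact (Finset.add_sum_erase s (fun i => a i * Real.log (a i)) hi0).symm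
      have hx : 1/2 ≤ a 0 / S := by rw [le_div_iff₀ hS0]; linarith
      have hx1 : a 0 / S < 1 := by rw [div_lt_one hS0]; linarith
      have h := logR2 hx hx1
      have hq2 : Real.log (1 - a 0 / S) = Real.log (S - a 0) - Real.log S := by
        rw [show 1 - a 0 / S = (S - a 0) / S by field_simp]
        exact Real.log_div (by linarith) (ne_of_gt hS0)
      have key : 2 * (S - a 0) * Real.log 2 ≤
          S * Real.log S - a 0 * Real.log (a 0) - (S - a 0) * Real.log (S - a 0) := by
        have h' := mul_le_mul_of_nonneg_left h hS0.le
        calc 2 * (S - a 0) * Real.log 2 = S * (2 * (1 - a 0 / S) * Real.log 2) := by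
              field_simp
          _ ≤ S * (-(a 0 / S * Real.log (a 0 / S)) - (1 - a 0 / S) * Real.log (1 - a 0 / S)) := h'
          _ = S * Real.log S - a 0 * Real.log (a 0) - (S - a 0) * Real.log (S - a 0) := by
              rw [hlogS, hq2]; field_simp; ring
      linarith

lemma weight_succ {n : ℕ} (a : Fin (n+1) → ℕ) :
    weight a = weight (Fin.init a) + (if a (Fin.last n) = 0 then 0 else 1) := by
  have h : ∀ m (b : Fin m → ℕ), weight b = ∑ i : Fin m, (if b i ≠ 0 then 1 else 0) := by
    intro m b; simp [weight, Finset.card_filter]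
  rw [h, h, Fin.sum_univ_castSucc]
  simp only [Fin.init]
  by_cases hh : a (Fin.last n) = 0 <;> simp [hh] <;>
    exact Finset.sum_congr rfl fun x _ => by by_cases hx : a x.castSucc = 0 <;> simp [hx]

lemma sum_weight_le : ∀ (n : ℕ) (A : Finset (Fin n → ℕ)), A.Nonempty →
    (∀ a ∈ A, ∀ z : Fin n → ℕ, (∀ i, z i ≤ a i) → z ∈ A) →
    2 * (∑ a ∈ A, (weight a : ℝ)) * Real.log 2 ≤ (A.card : ℝ) * Real.log (A.card : ℝ) := by
  intro n
  induction n with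
  | zero =>
    intro A hA hdown
    have hsub : Subsingleton (Fin 0 → ℕ) := ⟨fun f g => funext fun i => i.elim0⟩
    have hcard : A.card = 1 :=
      le_antisymm (Finset.card_le_one.mpr fun a _ b _ => Subsingleton.elim a b) hA.card_pos
    have hw : ∀ a : Fin 0 → ℕ, weight a = 0 := by
      intro a; simp [weight]
    simp [hw, hcard]
  | succ n ih =>
    intro A hA hdown
    classical
    set T := A.sup (fun a => a (Fin.last n)) with hT
    set C : ℕ → Finset (Fin n → ℕ) :=
      fun t => (A.filter (fun a => a (Fin.last n) = t)).image Fin.init with hCdef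
    have hmemC : ∀ (t : ℕ) (x : Fin n → ℕ), x ∈ C t ↔ Fin.snoc x t ∈ A := by
      intro t x
      constructor
      · intro hx
        obtain ⟨a, ha, rfl⟩ := Finset.mem_image.1 hx
        obtain ⟨haA, hat⟩ := Finset.mem_filter.1 ha
        rw [← hat, Fin.snoc_init_self]
        exact haA
      · intro hx
        exact Finset.mem_image.2 ⟨Fin.snoc x t, Finset.mem_filter.2 ⟨hx, by simp⟩, by simp⟩
    have hsnoc_le : ∀ (x z : Fin n → ℕ) (t u : ℕ), (∀ i, z i ≤ x i) → u ≤ t →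
        ∀ i : Fin (n+1), (Fin.snoc z u : Fin (n+1) → ℕ) i ≤ (Fin.snoc x t : Fin (n+1) → ℕ) i := by
      intro x z t u hzx hut i
      induction i using Fin.lastCases with
      | last => simpa using hut
      | cast i => simpa using hzx i
    have hdownC : ∀ t, ∀ x ∈ C t, ∀ z : Fin n → ℕ, (∀ i, z i ≤ x i) → z ∈ C t := by
      intro t x hx z hz
      rw [hmemC] at hx ⊢
      exact hdown _ hx _ (hsnoc_le x z t t hz le_rfl)
    have hC0 : ∀ t, C t ⊆ C 0 := by
      intro t x hx
      rw [hmemC] at hx ⊢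
      exact hdown _ hx _ (hsnoc_le x x t 0 (fun i => le_rfl) (Nat.zero_le t))
    have hCne : ∀ t ∈ Finset.range (T+1), (C t).Nonempty := by
      intro t ht
      obtain ⟨a0, ha0A, ha0⟩ := Finset.exists_mem_eq_sup A hA (fun a => a (Fin.last n))
      refine ⟨Fin.init a0, (hmemC _ _).2 ?_⟩
      refine hdown a0 ha0A _ ?_
      have hle : ∀ i, Fin.snoc (Fin.init a0) t i ≤ Fin.snoc (Fin.init a0) (a0 (Fin.last n)) i := by
        refine hsnoc_le _ _ _ _ (fun i => le_rfl) ?_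
        rw [← ha0]
        exact Nat.lt_succ_iff.1 (Finset.mem_range.1 ht)
      rw [Fin.snoc_init_self] at hle
      exact hle
    have hinj : ∀ t, ∀ a ∈ A.filter (fun a => a (Fin.last n) = t),
        ∀ b ∈ A.filter (fun a => a (Fin.last n) = t), Fin.init a = Fin.init b → a = b := by
      intro t a ha b hb hab
      have hat := (Finset.mem_filter.1 ha).2
      have hbt := (Finset.mem_filter.1 hb).2
      calc a = Fin.snoc (Fin.init a) (a (Fin.last n)) := (Fin.snoc_init_self a).symm
        _ = Fin.snoc (Fin.init b) (b (Fin.last n)) := by rw [hab, hat, hbt]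
        _ = b := Fin.snoc_init_self b
    have hcardC : ∀ t, (C t).card = (A.filter (fun a => a (Fin.last n) = t)).card := by
      intro t
      exact Finset.card_image_of_injOn (fun a ha b hb => hinj t a ha b hb)
    have hmaps : ∀ a ∈ A, a (Fin.last n) ∈ Finset.range (T+1) := fun a ha =>
      Finset.mem_range.2 (Nat.lt_succ_of_le (Finset.le_sup (f := fun a => a (Fin.last n)) ha))
    have hcardsum : (A.card : ℝ) = ∑ t ∈ Finset.range (T+1), ((C t).card : ℝ) := by
      rw [Finset.card_eq_sum_card_fiberwise hmaps]
      push_cast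
      exact Finset.sum_congr rfl fun t _ => by rw [hcardC t]
    have hwsum : (∑ a ∈ A, (weight a : ℝ))
        = ∑ t ∈ Finset.range (T+1),
            ((∑ x ∈ C t, (weight x : ℝ)) + (if t = 0 then 0 else ((C t).card : ℝ))) := by
      rw [← Finset.sum_fiberwise_of_maps_to hmaps (fun a => (weight a : ℝ))]
      refine Finset.sum_congr rfl fun t _ => ?_
      have e2 : ∑ x ∈ C t, (weight x : ℝ)
          = ∑ a ∈ A.filter (fun a => a (Fin.last n) = t), (weight (Fin.init a) : ℝ) :=
        Finset.sum_image (fun x hx y hy h => hinj t x hx y hy h)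
      have e1 : ∀ a ∈ A.filter (fun a => a (Fin.last n) = t), (weight a : ℝ)
          = (weight (Fin.init a) : ℝ) + (if t = 0 then 0 else 1) := by
        intro a ha
        have hat := (Finset.mem_filter.1 ha).2
        rw [weight_succ a, hat]
        push_cast
        by_cases h0 : t = 0 <;> simp [h0]
      rw [Finset.sum_congr rfl e1, Finset.sum_add_distrib, e2, Finset.sum_const]
      rw [hcardC t]
      by_cases h0 : t = 0 <;> simp [h0]
    have hg1 : ∀ t ∈ Finset.range (T+1), (1:ℝ) ≤ ((C t).card : ℝ) := by
      intro t ht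
      exact_mod_cast (hCne t ht).card_pos
    have hgmax : ∀ t ∈ Finset.range (T+1), ((C t).card : ℝ) ≤ ((C 0).card : ℝ) := by
      intro t _
      exact_mod_cast Finset.card_le_card (hC0 t)
    have h0mem : (0:ℕ) ∈ Finset.range (T+1) := Finset.mem_range.2 (Nat.succ_pos T)
    have hKL := KL (Finset.range (T+1)) (fun t => ((C t).card : ℝ)) hg1 h0mem hgmax
    have hIH : ∀ t ∈ Finset.range (T+1),
        2 * (∑ x ∈ C t, (weight x : ℝ)) * Real.log 2
          ≤ ((C t).card : ℝ) * Real.log ((C t).card : ℝ) :=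
      fun t ht => ih (C t) (hCne t ht) (hdownC t)
    have hite : ∑ t ∈ Finset.range (T+1), (if t = 0 then (0:ℝ) else ((C t).card : ℝ))
        = (∑ t ∈ Finset.range (T+1), ((C t).card : ℝ)) - ((C 0).card : ℝ) := by
      rw [← Finset.add_sum_erase _ (fun t => if t = 0 then (0:ℝ) else ((C t).card : ℝ)) h0mem,
        ← Finset.add_sum_erase _ (fun t => ((C t).card : ℝ)) h0mem]
      have e : ∑ t ∈ (Finset.range (T+1)).erase 0,
          (if t = 0 then (0:ℝ) else ((C t).card : ℝ))
          = ∑ t ∈ (Finset.range (T+1)).erase 0, ((C t).card : ℝ) :=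
        Finset.sum_congr rfl fun t ht => if_neg (Finset.ne_of_mem_erase ht)
      rw [e]
      simp
    calc 2 * (∑ a ∈ A, (weight a : ℝ)) * Real.log 2
        = ∑ t ∈ Finset.range (T+1),
            (2 * (∑ x ∈ C t, (weight x : ℝ)) * Real.log 2
              + 2 * (if t = 0 then 0 else ((C t).card : ℝ)) * Real.log 2) := by
          rw [hwsum, Finset.mul_sum, Finset.sum_mul]
          exact Finset.sum_congr rfl fun t _ => by ring
      _ ≤ ∑ t ∈ Finset.range (T+1),
            (((C t).card : ℝ) * Real.log ((C t).card : ℝ)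
              + 2 * (if t = 0 then 0 else ((C t).card : ℝ)) * Real.log 2) := by
          refine Finset.sum_le_sum fun t ht => add_le_add_left (hIH t ht) _
      _ = (∑ t ∈ Finset.range (T+1), ((C t).card : ℝ) * Real.log ((C t).card : ℝ))
            + 2 * ((∑ t ∈ Finset.range (T+1), ((C t).card : ℝ)) - ((C 0).card : ℝ))
              * Real.log 2 := by
          rw [Finset.sum_add_distrib]
          congr 1
          rw [← hite, Finset.mul_sum, Finset.sum_mul]
      _ ≤ (∑ t ∈ Finset.range (T+1), ((C t).card : ℝ))
            * Real.log (∑ t ∈ Finset.range (T+1), ((C t).card : ℝ)) := hKL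
      _ = (A.card : ℝ) * Real.log (A.card : ℝ) := by rw [hcardsum]

/-- **Theorem 3 (average weight in a downset).** If `n ≥ 1` and `A ⊆ ℤ_{≥0}^n` is a
finite non-empty downset, then `(1/|A|)·∑_{a ∈ A} w(a) ≤ (1/2)·log₂ |A|`. -/
theorem avg_weight_downset (n : ℕ) (hn : 1 ≤ n)
    (A : Finset (Fin n → ℕ)) (hA : A.Nonempty)
    (hdown : ∀ a ∈ A, ∀ z : Fin n → ℕ, (∀ i, z i ≤ a i) → z ∈ A) :
    (∑ a ∈ A, (weight a : ℝ)) / A.card ≤ (1 / 2) * Real.logb 2 A.card := by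
  have main := sum_weight_le n A hA hdown
  have hc0 : (0:ℝ) < (A.card : ℝ) := by exact_mod_cast hA.card_pos
  have hL : (0:ℝ) < Real.log 2 := Real.log_pos (by norm_num)
  have hlogb : Real.logb 2 (A.card : ℝ) * Real.log 2 = Real.log (A.card : ℝ) := by
    rw [Real.logb]
    field_simp
  rw [div_le_iff₀ hc0]
  have h2 : 2 * (∑ a ∈ A, (weight a : ℝ)) ≤ (A.card : ℝ) * Real.logb 2 (A.card : ℝ) := by
    have h1 : 2 * (∑ a ∈ A, (weight a : ℝ)) * Real.log 2
        ≤ ((A.card : ℝ) * Real.logb 2 (A.card : ℝ)) * Real.log 2 := by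
      calc 2 * (∑ a ∈ A, (weight a : ℝ)) * Real.log 2 ≤ (A.card : ℝ) * Real.log (A.card : ℝ) := main
        _ = ((A.card : ℝ) * Real.logb 2 (A.card : ℝ)) * Real.log 2 := by rw [mul_assoc, hlogb]
    exact le_of_mul_le_mul_right h1 hL
  linarith
end

section
/- Let S = {s₁,…,sₙ} be a finite independent generating subset of an abelian group G, and let A ⊆ G be finite, non-empty, and compressed with respect to S. For a ∈ G, let w(a) denote the number of non-zero summands in the unique representation a = z₁s₁ + ⋯ + zₙsₙ with zᵢ ∈ [0, ord sᵢ) when sᵢ has finite order and zᵢ ∈ ℤ otherwise. Then (1/|A|) · Σ_{a∈A} w(a) ≤ (1/2) · log₂|A|. -/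
/-- The compression of a set `A` along `s` (relative to the complementary set
`T = S ∖ {s}`): in each coset `g + ⟨s⟩` with `g ∈ ⟨T⟩`, the set `A` is replaced by the
arithmetic progression `{g, g+s, …, g+(k_g-1)s}` where `k_g = |A ∩ (g + ⟨s⟩)|`. -/
def compress {G : Type*} [AddCommGroup G] (s : G) (T : Set G) (A : Set G) : Set G :=
  ⋃ g ∈ (AddSubgroup.closure T : Set G),
    {x : G | ∃ k : ℕ, x = g + k • s ∧
      k < Nat.card {a : G // a ∈ A ∧ a - g ∈ AddSubgroup.zmultiples s}}

namespace AvgWeight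

open Finset
open scoped Classical

variable {α : Type*}

noncomputable def fibc {β : Type*} (A : Finset α) (p : α → β) (a : α) : ℕ :=
  (A.filter fun b => p b = p a).card

lemma fibc_congr {β : Type*} (A : Finset α) (p : α → β) {a a' : α} (h : p a = p a') :
    fibc A p a = fibc A p a' := by
  simp only [fibc, h]

lemma fibc_pos {β : Type*} (A : Finset α) (p : α → β) {a : α} (ha : a ∈ A) :
    0 < fibc A p a :=
  Finset.card_pos.mpr ⟨a, Finset.mem_filter.mpr ⟨ha, rfl⟩⟩

lemma card_filter_iff (A : Finset α) (P Q : α → Prop) (h : ∀ x ∈ A, P x ↔ Q x) :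
    (A.filter P).card = (A.filter Q).card := by
  congr 1
  exact Finset.filter_congr h

lemma key {β γ δ : Type*} (A : Finset α) (p : α → β) (q : α → γ) (r : α → δ)
    (hpq : ∀ a ∈ A, ∀ b ∈ A, q a = q b → p a = p b) {b c : α} (hb : b ∈ A) (hc : c ∈ A) :
    (∑ a ∈ A, if q b = q a ∧ p c = p a ∧ r c = r a
        then ((fibc A p a : ℝ) * (fibc A (fun x => (q x, r x)) a : ℝ))⁻¹ else 0)
      ≤ if p c = p b then ((fibc A p b : ℝ))⁻¹ else 0 := by
  rw [← Finset.sum_filter]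
  rcases (A.filter fun a => q b = q a ∧ p c = p a ∧ r c = r a).eq_empty_or_nonempty with hF | ⟨a₀, ha₀⟩
  · rw [hF, Finset.sum_empty]
    split <;> positivity
  · obtain ⟨ha₀A, hq₀, hp₀, hr₀⟩ : a₀ ∈ A ∧ q b = q a₀ ∧ p c = p a₀ ∧ r c = r a₀ := by
      simpa using Finset.mem_filter.mp ha₀
    have hpb : p a₀ = p b := hpq a₀ ha₀A b hb hq₀.symm
    have hcb : p c = p b := hp₀.trans hpb
    rw [if_pos hcb]
    have hFeq : (A.filter fun a => q b = q a ∧ p c = p a ∧ r c = r a)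
        = A.filter fun x => (q x, r x) = (q a₀, r a₀) := by
      apply Finset.filter_congr
      intro x hx
      constructor
      · rintro ⟨h1, h2, h3⟩
        rw [Prod.mk.injEq]
        exact ⟨h1.symm.trans hq₀, h3.symm.trans hr₀⟩
      · intro hpair
        rw [Prod.mk.injEq] at hpair
        obtain ⟨h1, h2⟩ := hpair
        refine ⟨hq₀.trans h1.symm, ?_, hr₀.trans h2.symm⟩
        exact hp₀.trans (hpq x hx a₀ ha₀A h1).symm
    rw [hFeq]
    have hterm : ∀ a ∈ A.filter fun x => (q x, r x) = (q a₀, r a₀),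
        ((fibc A p a : ℝ) * (fibc A (fun x => (q x, r x)) a : ℝ))⁻¹
          = ((fibc A p b : ℝ) * (fibc A (fun x => (q x, r x)) a₀ : ℝ))⁻¹ := by
      intro a ha
      obtain ⟨haA, hpair⟩ := Finset.mem_filter.mp ha
      have h1 : p a = p b := by
        have hq : q a = q a₀ := (Prod.mk.injEq _ _ _ _ ▸ hpair).1
        exact (hpq a haA a₀ ha₀A hq).trans hpb
      rw [fibc_congr A p h1, fibc_congr A (fun x => (q x, r x)) hpair]
    rw [Finset.sum_congr rfl hterm, Finset.sum_const, nsmul_eq_mul]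
    have hcard : (A.filter fun x => (q x, r x) = (q a₀, r a₀)).card
        = fibc A (fun x => (q x, r x)) a₀ := by simp [fibc]
    rw [hcard]
    have hQR : (0:ℝ) < (fibc A (fun x => (q x, r x)) a₀ : ℝ) := by
      exact_mod_cast fibc_pos A _ ha₀A
    have hP : (0:ℝ) < (fibc A p b : ℝ) := by exact_mod_cast fibc_pos A p hb
    rw [mul_inv, mul_comm ((fibc A p b : ℝ))⁻¹, ← mul_assoc,
      mul_inv_cancel₀ (ne_of_gt hQR), one_mul]


lemma logsub {β γ δ : Type*} (A : Finset α) (p : α → β) (q : α → γ) (r : α → δ)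
    (hpq : ∀ a ∈ A, ∀ b ∈ A, q a = q b → p a = p b) :
    ∑ a ∈ A, (Real.log (fibc A q a) - Real.log (fibc A (fun x => (q x, r x)) a))
      ≤ ∑ a ∈ A, (Real.log (fibc A p a) - Real.log (fibc A (fun x => (p x, r x)) a)) := by
  have hsum : (∑ a ∈ A, (fibc A q a : ℝ) * (fibc A (fun x => (p x, r x)) a : ℝ)
      * ((fibc A p a : ℝ) * (fibc A (fun x => (q x, r x)) a : ℝ))⁻¹) ≤ (A.card : ℝ) := by
    have expand : ∀ a ∈ A, (fibc A q a : ℝ) * (fibc A (fun x => (p x, r x)) a : ℝ)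
        * ((fibc A p a : ℝ) * (fibc A (fun x => (q x, r x)) a : ℝ))⁻¹
        = ∑ b ∈ A, ∑ c ∈ A, (if q b = q a ∧ p c = p a ∧ r c = r a
            then ((fibc A p a : ℝ) * (fibc A (fun x => (q x, r x)) a : ℝ))⁻¹ else 0) := by
      intro a ha
      have hQ : (fibc A q a : ℝ) = ∑ b ∈ A, (if q b = q a then (1:ℝ) else 0) := by
        rw [Finset.sum_boole]
        norm_num [fibc]
      have hPR : (fibc A (fun x => (p x, r x)) a : ℝ)
          = ∑ c ∈ A, (if p c = p a ∧ r c = r a then (1:ℝ) else 0) := by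
        unfold fibc
        rw [Finset.card_filter]
        push_cast
        refine Finset.sum_congr rfl fun c _ => ?_
        by_cases h : (p c, r c) = (p a, r a)
        · rw [if_pos h, if_pos (Prod.ext_iff.mp h)]
        · rw [if_neg h, if_neg (fun hc => h (Prod.ext_iff.mpr hc))]
      rw [hQ, hPR, Finset.sum_mul_sum, Finset.sum_mul]
      refine Finset.sum_congr rfl fun b _ => ?_
      rw [Finset.sum_mul]
      refine Finset.sum_congr rfl fun c _ => ?_
      split_ifs <;> simp_all
    rw [Finset.sum_congr rfl expand, Finset.sum_comm]
    have : ∀ b ∈ A, (∑ a ∈ A, ∑ c ∈ A, (if q b = q a ∧ p c = p a ∧ r c = r a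
        then ((fibc A p a : ℝ) * (fibc A (fun x => (q x, r x)) a : ℝ))⁻¹ else 0)) ≤ 1 := by
      intro b hb
      rw [Finset.sum_comm]
      have step : ∀ c ∈ A, (∑ a ∈ A, (if q b = q a ∧ p c = p a ∧ r c = r a
          then ((fibc A p a : ℝ) * (fibc A (fun x => (q x, r x)) a : ℝ))⁻¹ else 0))
          ≤ (if p c = p b then ((fibc A p b : ℝ))⁻¹ else 0) := fun c hc =>
        key A p q r hpq hb hc
      refine le_trans (Finset.sum_le_sum step) ?_
      rw [← Finset.sum_filter, Finset.sum_const, nsmul_eq_mul]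
      have hcard : ((A.filter fun c => p c = p b).card : ℝ) = (fibc A p b : ℝ) := by
        norm_num [fibc]
      rw [hcard]
      have hP : (0:ℝ) < (fibc A p b : ℝ) := by exact_mod_cast fibc_pos A p hb
      field_simp
      exact le_refl _
    refine le_trans (Finset.sum_le_sum this) ?_
    simp
  -- now the log part
  have hlog : ∀ a ∈ A, (Real.log (fibc A q a) - Real.log (fibc A (fun x => (q x, r x)) a))
      - (Real.log (fibc A p a) - Real.log (fibc A (fun x => (p x, r x)) a))
      ≤ (fibc A q a : ℝ) * (fibc A (fun x => (p x, r x)) a : ℝ)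
        * ((fibc A p a : ℝ) * (fibc A (fun x => (q x, r x)) a : ℝ))⁻¹ - 1 := by
    intro a ha
    have hQ : (0:ℝ) < (fibc A q a : ℝ) := by exact_mod_cast fibc_pos A q ha
    have hP : (0:ℝ) < (fibc A p a : ℝ) := by exact_mod_cast fibc_pos A p ha
    have hQR : (0:ℝ) < (fibc A (fun x => (q x, r x)) a : ℝ) := by
      exact_mod_cast fibc_pos A _ ha
    have hPR : (0:ℝ) < (fibc A (fun x => (p x, r x)) a : ℝ) := by
      exact_mod_cast fibc_pos A _ ha
    have ht : (0:ℝ) < (fibc A q a : ℝ) * (fibc A (fun x => (p x, r x)) a : ℝ)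
        * ((fibc A p a : ℝ) * (fibc A (fun x => (q x, r x)) a : ℝ))⁻¹ := by positivity
    have := Real.log_le_sub_one_of_pos ht
    rw [Real.log_mul (by positivity) (by positivity), Real.log_mul (ne_of_gt hQ) (ne_of_gt hPR),
      Real.log_inv, Real.log_mul (ne_of_gt hP) (ne_of_gt hQR)] at this
    linarith
  have h2 := Finset.sum_le_sum hlog
  simp only [Finset.sum_sub_distrib, Finset.sum_const, nsmul_eq_mul, mul_one] at h2
  have : (∑ a ∈ A, ((fibc A q a : ℝ) * (fibc A (fun x => (p x, r x)) a : ℝ)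
      * ((fibc A p a : ℝ) * (fibc A (fun x => (q x, r x)) a : ℝ))⁻¹)) - (A.card : ℝ) ≤ 0 :=
    sub_nonpos.mpr hsum
  simp only [Finset.sum_sub_distrib]
  linarith


variable {ι β : Type*}

noncomputable def cJ (A : Finset α) (f : ι → α → β) (J : Finset ι) (a : α) : ℕ :=
  (A.filter fun b => ∀ j ∈ J, f j b = f j a).card

noncomputable def LL (A : Finset α) (f : ι → α → β) (J : Finset ι) : ℝ :=
  ∑ a ∈ A, Real.log (cJ A f J a)

noncomputable def pJ (f : ι → α → β) (J : Finset ι) (x : α) : ι → Option β :=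
  fun j => if j ∈ J then some (f j x) else none

lemma pJ_eq_iff {f : ι → α → β} {J : Finset ι} {x y : α} :
    pJ f J x = pJ f J y ↔ ∀ j ∈ J, f j x = f j y := by
  constructor
  · intro h j hj
    have := congrFun h j
    simpa [pJ, hj] using this
  · intro h
    funext j
    by_cases hj : j ∈ J
    · simp [pJ, hj, h j hj]
    · simp [pJ, hj]

lemma cJ_eq_fibc (A : Finset α) (f : ι → α → β) (J : Finset ι) (a : α) :
    cJ A f J a = fibc A (pJ f J) a := by
  unfold cJ fibc
  congr 1
  ext x
  simp only [Finset.mem_filter]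
  exact and_congr_right fun _ => pJ_eq_iff.symm

lemma cJ_pair [DecidableEq ι] (A : Finset α) (f : ι → α → β) (J : Finset ι) (i : ι) (a : α) :
    fibc A (fun x => (pJ f J x, f i x)) a = cJ A f (insert i J) a := by
  unfold cJ fibc
  congr 1
  ext x
  simp only [Finset.mem_filter]
  refine and_congr_right fun _ => ?_
  constructor
  · intro h
    rw [Prod.mk.injEq] at h
    intro j hj
    rcases Finset.mem_insert.mp hj with rfl | hj'
    · exact h.2
    · exact pJ_eq_iff.mp h.1 j hj'
  · intro h
    rw [Prod.mk.injEq]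
    exact ⟨pJ_eq_iff.mpr fun j hj => h j (Finset.mem_insert_of_mem hj),
      h i (Finset.mem_insert_self i J)⟩

lemma submod [DecidableEq ι] (A : Finset α) (f : ι → α → β) {J J' : Finset ι} (h : J ⊆ J') (i : ι) :
    LL A f J' - LL A f (insert i J') ≤ LL A f J - LL A f (insert i J) := by
  have hlog := logsub A (pJ f J) (pJ f J') (fun x => f i x)
    (fun a _ b _ hq => pJ_eq_iff.mpr fun j hj => pJ_eq_iff.mp hq j (h hj))
  unfold LL
  rw [← Finset.sum_sub_distrib, ← Finset.sum_sub_distrib]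
  calc ∑ a ∈ A, (Real.log (cJ A f J' a) - Real.log (cJ A f (insert i J') a))
      = ∑ a ∈ A, (Real.log (fibc A (pJ f J') a)
        - Real.log (fibc A (fun x => (pJ f J' x, f i x)) a)) := by
        refine Finset.sum_congr rfl fun a _ => ?_
        rw [cJ_eq_fibc, cJ_pair]
    _ ≤ ∑ a ∈ A, (Real.log (fibc A (pJ f J) a)
        - Real.log (fibc A (fun x => (pJ f J x, f i x)) a)) := hlog
    _ = ∑ a ∈ A, (Real.log (cJ A f J a) - Real.log (cJ A f (insert i J) a)) := by
        refine Finset.sum_congr rfl fun a _ => ?_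
        rw [cJ_eq_fibc, cJ_pair]

lemma han_gen [DecidableEq ι] (A : Finset α) (f : ι → α → β) (I : Finset ι) :
    ∑ i ∈ I, (LL A f (I.erase i) - LL A f I) ≤ LL A f ∅ - LL A f I := by
  induction I using Finset.induction_on with
  | empty => simp
  | insert x I hx IH =>
    rw [Finset.sum_insert hx]
    have hterm : LL A f ((insert x I).erase x) - LL A f (insert x I)
        = LL A f I - LL A f (insert x I) := by rw [Finset.erase_insert hx]
    have hbound : ∑ i ∈ I, (LL A f ((insert x I).erase i) - LL A f (insert x I))
        ≤ ∑ i ∈ I, (LL A f (I.erase i) - LL A f I) := by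
      refine Finset.sum_le_sum fun i hi => ?_
      have hne : i ≠ x := fun hix => hx (hix ▸ hi)
      have h1 : (insert x I).erase i = insert x (I.erase i) :=
        Finset.erase_insert_of_ne hne.symm
      have h2 : insert i (insert x (I.erase i)) = insert x I := by
        rw [Finset.insert_comm, Finset.insert_erase hi]
      have h3 : insert i (I.erase i) = I := Finset.insert_erase hi
      have := submod A f (Finset.subset_insert x (I.erase i)) i
      rw [h2, h3] at this
      rw [h1]
      exact this
    have := le_trans hbound IH
    rw [hterm]
    linarith

lemma han [DecidableEq ι] (A : Finset α) (f : ι → α → β) (I : Finset ι)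
    (hinj : ∀ a ∈ A, ∀ b ∈ A, (∀ i ∈ I, f i a = f i b) → a = b) :
    ∑ i ∈ I, ∑ a ∈ A, Real.log (cJ A f (I.erase i) a)
      ≤ (A.card : ℝ) * Real.log (A.card : ℝ) := by
  have hI : LL A f I = 0 := by
    unfold LL
    rw [Finset.sum_eq_zero]
    intro a ha
    have : cJ A f I a = 1 := by
      unfold cJ
      rw [Finset.card_eq_one]
      refine ⟨a, ?_⟩
      ext b
      simp only [Finset.mem_filter, Finset.mem_singleton]
      constructor
      · rintro ⟨hb, hfb⟩
        exact hinj b hb a ha hfb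
      · rintro rfl
        exact ⟨ha, fun j _ => rfl⟩
    rw [this]
    simp
  have hempty : LL A f ∅ = (A.card : ℝ) * Real.log (A.card : ℝ) := by
    unfold LL cJ
    simp
  have := han_gen A f I
  rw [hI] at this
  simp only [sub_zero] at this
  rw [← hempty]
  calc ∑ i ∈ I, ∑ a ∈ A, Real.log (cJ A f (I.erase i) a) = ∑ i ∈ I, LL A f (I.erase i) := rfl
    _ ≤ LL A f ∅ := this


lemma card_filter_ext (A : Finset α) (P Q : α → Prop) [DecidablePred P] [DecidablePred Q]
    (h : ∀ x ∈ A, P x ↔ Q x) : (A.filter P).card = (A.filter Q).card := by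
  congr 1
  ext x
  simp only [Finset.mem_filter]
  exact and_congr_right fun hx => h x hx

lemma klog (k : ℕ) : 2 * ((k : ℝ) - 1) ≤ (k : ℝ) * Real.logb 2 (k : ℝ) := by
  match k with
  | 0 => norm_num
  | 1 => norm_num
  | (n+2) =>
    have hk2 : 2 ≤ n + 2 := by omega
    have hnat : 4 ^ (n + 2 - 1) ≤ (n + 2) ^ (n + 2) := by
      rcases lt_or_ge (n+2) 4 with h4 | h4
      · have hn2 : n < 2 := by omega
        interval_cases n <;> decide
      · calc 4 ^ (n + 2 - 1) ≤ 4 ^ (n + 2) := Nat.pow_le_pow_right (by norm_num) (Nat.sub_le _ 1)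
          _ ≤ (n + 2) ^ (n + 2) := Nat.pow_le_pow_left h4 _
    have hcast : ((4:ℝ)) ^ (n + 2 - 1) ≤ ((n + 2 : ℕ) : ℝ) ^ (n + 2) := by
      exact_mod_cast hnat
    have hlog := Real.logb_le_logb_of_le (one_lt_two) (by positivity) hcast
    rw [Real.logb_pow, Real.logb_pow] at hlog
    have h4 : Real.logb 2 4 = 2 := by
      rw [show (4:ℝ) = 2^(2:ℕ) by norm_num, Real.logb_pow, Real.logb_self_eq_one (by norm_num)]
      norm_num
    rw [h4] at hlog
    have hsub : ((n + 2 - 1 : ℕ) : ℝ) = ((n + 2 : ℕ) : ℝ) - 1 := by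
      push_cast [Nat.cast_sub (by omega : 1 ≤ n + 2)]
      ring
    rw [hsub] at hlog
    push_cast at hlog ⊢
    linarith

lemma exists_rep {G : Type*} [AddCommGroup G] {T : Finset G} {g : G}
    (hg : g ∈ AddSubgroup.closure (T : Set G)) : ∃ m : G → ℤ, g = ∑ s ∈ T, m s • s := by
  classical
  refine AddSubgroup.closure_induction (p := fun x _ => ∃ m : G → ℤ, x = ∑ s ∈ T, m s • s)
    ?_ ?_ ?_ ?_ hg
  · intro x hx
    refine ⟨fun y => if y = x then 1 else 0, ?_⟩
    have h1 : ∀ s ∈ T, (if s = x then (1:ℤ) else 0) • s = (if s = x then s else 0) := by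
      intro s _; split_ifs <;> simp
    rw [Finset.sum_congr rfl h1, Finset.sum_ite_eq' T x (fun s => s),
      if_pos (Finset.mem_coe.mp hx)]
  · exact ⟨0, by simp⟩
  · rintro x y _ _ ⟨m1, h1⟩ ⟨m2, h2⟩
    refine ⟨m1 + m2, ?_⟩
    rw [h1, h2, ← Finset.sum_add_distrib]
    refine Finset.sum_congr rfl fun s _ => ?_
    simp [add_zsmul]
  · rintro x _ ⟨m, h1⟩
    refine ⟨-m, ?_⟩
    rw [h1, ← Finset.sum_neg_distrib]
    refine Finset.sum_congr rfl fun s _ => ?_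
    simp [neg_zsmul]


noncomputable def pT {G : Type*} [AddCommGroup G] [DecidableEq G] (z : G → G → ℤ)
    (T : Finset G) (a : G) : G → ℤ := fun s => if s ∈ T then z a s else 0

lemma pT_eq_iff {G : Type*} [AddCommGroup G] [DecidableEq G] {z : G → G → ℤ}
    {T : Finset G} {a b : G} : pT z T a = pT z T b ↔ ∀ j ∈ T, z a j = z b j := by
  constructor
  · intro h j hj
    have := congrFun h j
    simpa [pT, hj] using this
  · intro h
    funext j
    by_cases hj : j ∈ T
    · simp [pT, hj, h j hj]
    · simp [pT, hj]


end AvgWeight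

open AvgWeight Finset

/-- **Corollary (average weight, general groups).** Let `S` be a finite independent
generating subset of an abelian group `G`, and let `A ⊆ G` be finite, non-empty, and
compressed with respect to `S`. For `a ∈ G`, let `w(a)` be the number of non-zero
summands in the unique representation `a = ∑_{s ∈ S} z_s·s` with `z_s ∈ [0, ord s)` when
`s` has finite order and `z_s ∈ ℤ` otherwise. Then
`(1/|A|)·∑_{a ∈ A} w(a) ≤ (1/2)·log₂ |A|`. -/

theorem avg_weight_compressed {G : Type*} [AddCommGroup G] [DecidableEq G]
    (S : Finset G) (hind : IsIndependent S)
    (hgen : AddSubgroup.closure (S : Set G) = ⊤)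
    (A : Finset G) (hA : A.Nonempty)
    (hcomp : ∀ s ∈ S, compress s (↑(S.erase s)) (↑A : Set G) = (↑A : Set G))
    (w : G → ℕ)
    (hw : ∀ a ∈ A, ∃ z : G → ℤ,
      a = ∑ s ∈ S, z s • s ∧
      (∀ s ∈ S, IsOfFinAddOrder s → 0 ≤ z s ∧ z s < (addOrderOf s : ℤ)) ∧
      w a = (S.filter (fun s => z s ≠ 0)).card) :
    (∑ a ∈ A, (w a : ℝ)) / A.card ≤ (1 / 2) * Real.logb 2 A.card := by
  classical
  choose zfun hzfun using hw
  set z : G → G → ℤ := fun a => if h : a ∈ A then zfun a h else 0 with hzdef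
  have hz1 : ∀ a ∈ A, a = ∑ s ∈ S, z a s • s := by
    intro a ha
    simp only [hzdef, dif_pos ha]
    exact (hzfun a ha).1
  have hz2 : ∀ a ∈ A, ∀ s ∈ S, IsOfFinAddOrder s → 0 ≤ z a s ∧ z a s < (addOrderOf s : ℤ) := by
    intro a ha
    simp only [hzdef, dif_pos ha]
    exact (hzfun a ha).2.1
  have hz3 : ∀ a ∈ A, w a = (S.filter (fun s => z a s ≠ 0)).card := by
    intro a ha
    simp only [hzdef, dif_pos ha]
    exact (hzfun a ha).2.2
  -- coefficient-vanishing helpers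
  have hzero1 : ∀ x ∈ A, ∀ s ∈ S, z x s • s = 0 → z x s = 0 := by
    intro x hx s hs h0
    by_cases hf : IsOfFinAddOrder s
    · obtain ⟨h0', hlt⟩ := hz2 x hx s hs hf
      exact Int.eq_zero_of_abs_lt_dvd (addOrderOf_dvd_iff_zsmul_eq_zero.mpr h0)
        (by rwa [abs_of_nonneg h0'])
    · by_contra hne
      exact hf (isOfFinAddOrder_iff_zsmul_eq_zero.mpr ⟨_, hne, h0⟩)
  have hdiffzero : ∀ x ∈ A, ∀ y ∈ A, ∀ s ∈ S, (z x s - z y s) • s = 0 → z x s = z y s := by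
    intro x hx y hy s hs h0
    by_cases hf : IsOfFinAddOrder s
    · obtain ⟨hx0, hxlt⟩ := hz2 x hx s hs hf
      obtain ⟨hy0, hylt⟩ := hz2 y hy s hs hf
      have := Int.eq_zero_of_abs_lt_dvd (addOrderOf_dvd_iff_zsmul_eq_zero.mpr h0)
        (abs_lt.mpr ⟨by linarith, by linarith⟩)
      linarith
    · by_contra hne
      exact hf (isOfFinAddOrder_iff_zsmul_eq_zero.mpr ⟨_, sub_ne_zero.mpr hne, h0⟩)
  -- independence computations
  have main1 : ∀ i ∈ S, ∀ x ∈ A, ∀ y ∈ A, (∃ m : ℤ, x - y = m • i) →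
      ∀ s ∈ S, s ≠ i → z x s = z y s := by
    intro i hi x hx y hy hm s hs hsne
    obtain ⟨m, hm⟩ := hm
    have hc : ∑ t ∈ S, (fun t => z x t - z y t - (if t = i then m else 0)) t • t = 0 := by
      have e1 : ∀ t ∈ S, (z x t - z y t - (if t = i then m else 0)) • t
          = z x t • t - z y t • t - (if t = i then m • t else 0) := by
        intro t _
        split_ifs <;> simp only [sub_zero, sub_zsmul] <;> abel
      rw [Finset.sum_congr rfl e1, Finset.sum_sub_distrib, Finset.sum_sub_distrib,
        Finset.sum_ite_eq' S i (fun t => m • t), if_pos hi, ← hz1 x hx, ← hz1 y hy,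
        ← hm, sub_self]
    have := hind _ hc s hs
    simp only [if_neg hsne] at this
    rw [sub_zero] at this
    exact hdiffzero x hx y hy s hs this
  have main2 : ∀ i ∈ S, ∀ x ∈ A,
      x ∈ AddSubgroup.closure ((S.erase i : Finset G) : Set G) → z x i = 0 := by
    intro i hi x hx hmem
    obtain ⟨m, hm⟩ := exists_rep hmem
    have hc : ∑ t ∈ S, (fun t => z x t - (if t ∈ S.erase i then m t else 0)) t • t = 0 := by
      have e1 : ∀ t ∈ S, (z x t - (if t ∈ S.erase i then m t else 0)) • t
          = z x t • t - (if t ∈ S.erase i then m t • t else 0) := by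
        intro t _
        split_ifs <;> simp only [sub_zero, sub_zsmul] <;> abel
      rw [Finset.sum_congr rfl e1, Finset.sum_sub_distrib, ← hz1 x hx,
        Finset.sum_ite_mem, Finset.inter_eq_right.mpr (Finset.erase_subset i S),
        ← hm, sub_self]
    have h0 := hind _ hc i hi
    simp only [if_neg (Finset.notMem_erase i S), sub_zero] at h0
    exact hzero1 x hx i hi h0
  -- compress: find the zero-coefficient representative in each fiber
  have hzeroelem : ∀ i ∈ S, ∀ a ∈ A, ∃ a₀ ∈ A, z a₀ i = 0 ∧
      ∀ s ∈ S, s ≠ i → z a₀ s = z a s := by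
    intro i hi a ha
    have hmem : (a : G) ∈ compress i (↑(S.erase i)) (↑A : Set G) := by
      rw [hcomp i hi]
      exact Finset.mem_coe.mpr ha
    simp only [compress, Set.mem_iUnion, Set.mem_setOf_eq] at hmem
    obtain ⟨g, hg, k, hak, hkcard⟩ := hmem
    have hgA : g ∈ A := by
      have hgmem : g ∈ compress i (↑(S.erase i)) (↑A : Set G) := by
        simp only [compress, Set.mem_iUnion, Set.mem_setOf_eq]
        exact ⟨g, hg, 0, by simp, lt_of_le_of_lt (Nat.zero_le k) hkcard⟩
      rw [hcomp i hi] at hgmem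
      exact Finset.mem_coe.mp hgmem
    refine ⟨g, hgA, main2 i hi g hgA hg, ?_⟩
    intro s hs hsne
    exact main1 i hi g hgA a ha ⟨-(k : ℤ), by rw [hak, neg_zsmul, natCast_zsmul]; abel⟩ s hs hsne
  -- per-coordinate inequality
  have hstep2 : ∀ i ∈ S, 2 * ((A.filter fun a => z a i ≠ 0).card : ℝ)
      ≤ ∑ a ∈ A, Real.logb 2 (cJ A (fun j b => z b j) (S.erase i) a) := by
    intro i hi
    have hcount : (A.filter fun a => z a i = 0).card = (A.image (pT z (S.erase i))).card := by
      have himg : (A.filter fun a => z a i = 0).image (pT z (S.erase i))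
          = A.image (pT z (S.erase i)) := by
        apply Finset.Subset.antisymm (Finset.image_subset_image (Finset.filter_subset _ _))
        intro v hv
        obtain ⟨a, ha, rfl⟩ := Finset.mem_image.mp hv
        obtain ⟨a₀, ha₀, hz₀, hsame⟩ := hzeroelem i hi a ha
        refine Finset.mem_image.mpr ⟨a₀, Finset.mem_filter.mpr ⟨ha₀, hz₀⟩, ?_⟩
        exact pT_eq_iff.mpr fun j hj =>
          hsame j (Finset.mem_of_mem_erase hj) (Finset.ne_of_mem_erase hj)
      have hinj2 : Set.InjOn (pT z (S.erase i)) ↑(A.filter fun a => z a i = 0) := by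
        intro x hx y hy hxy
        simp only [Finset.coe_filter, Set.mem_setOf_eq] at hx hy
        obtain ⟨hxA, hx0⟩ := hx
        obtain ⟨hyA, hy0⟩ := hy
        rw [hz1 x hxA, hz1 y hyA]
        refine Finset.sum_congr rfl fun s hs => ?_
        by_cases hsi : s = i
        · subst hsi; rw [hx0, hy0]
        · rw [pT_eq_iff.mp hxy s (Finset.mem_erase.mpr ⟨hsi, hs⟩)]
      rw [← himg, Finset.card_image_of_injOn hinj2]
    have hfib : ∑ a ∈ A, Real.logb 2 (cJ A (fun j b => z b j) (S.erase i) a)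
        = ∑ v ∈ A.image (pT z (S.erase i)),
            ∑ a ∈ A.filter (fun a => pT z (S.erase i) a = v),
            Real.logb 2 (cJ A (fun j b => z b j) (S.erase i) a) :=
      (Finset.sum_fiberwise_of_maps_to (fun a ha => Finset.mem_image_of_mem _ ha) _).symm
    have hinner : ∀ v ∈ A.image (pT z (S.erase i)),
        ∑ a ∈ A.filter (fun a => pT z (S.erase i) a = v),
          Real.logb 2 (cJ A (fun j b => z b j) (S.erase i) a)
        = ((A.filter (fun a => pT z (S.erase i) a = v)).card : ℝ)
          * Real.logb 2 ((A.filter (fun a => pT z (S.erase i) a = v)).card : ℝ) := by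
      intro v hv
      have hc : ∀ a ∈ A.filter (fun a => pT z (S.erase i) a = v),
          Real.logb 2 (cJ A (fun j b => z b j) (S.erase i) a)
            = Real.logb 2 ((A.filter (fun a => pT z (S.erase i) a = v)).card : ℝ) := by
        intro a ha
        obtain ⟨haA, hav⟩ := Finset.mem_filter.mp ha
        congr 2
        unfold cJ
        congr 1
        ext b
        simp only [Finset.mem_filter]
        refine and_congr_right fun hb => ?_
        constructor
        · intro h
          rw [← hav]
          exact pT_eq_iff.mpr h
        · intro h
          exact pT_eq_iff.mp (h.trans hav.symm)
      rw [Finset.sum_congr rfl hc, Finset.sum_const, nsmul_eq_mul]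
    have hge : ∑ v ∈ A.image (pT z (S.erase i)),
        2 * (((A.filter (fun a => pT z (S.erase i) a = v)).card : ℝ) - 1)
        ≤ ∑ a ∈ A, Real.logb 2 (cJ A (fun j b => z b j) (S.erase i) a) := by
      rw [hfib]
      refine Finset.sum_le_sum fun v hv => ?_
      rw [hinner v hv]
      exact klog _
    have hsum1 : ∑ v ∈ A.image (pT z (S.erase i)),
        (((A.filter (fun a => pT z (S.erase i) a = v)).card : ℝ)) = (A.card : ℝ) := by
      norm_cast
      exact (Finset.card_eq_sum_card_fiberwise
        (fun a ha => Finset.mem_image_of_mem (pT z (S.erase i)) ha)).symm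
    have hexpand : ∑ v ∈ A.image (pT z (S.erase i)),
        2 * (((A.filter (fun a => pT z (S.erase i) a = v)).card : ℝ) - 1)
        = 2 * ((A.card : ℝ) - ((A.image (pT z (S.erase i))).card : ℝ)) := by
      rw [Finset.sum_congr rfl fun v _ => mul_sub (2:ℝ) _ 1, Finset.sum_sub_distrib,
        ← Finset.mul_sum, hsum1, Finset.sum_const, nsmul_eq_mul]
      ring
    have hzero_count : ((A.filter fun a => z a i ≠ 0).card : ℝ)
        = (A.card : ℝ) - ((A.image (pT z (S.erase i))).card : ℝ) := by
      have hsplit := Finset.card_filter_add_card_filter_not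
        (s := A) (p := fun a => z a i = 0)
      rw [← hcount]
      have : ((A.filter fun a => z a i = 0).card : ℝ)
          + ((A.filter fun a => ¬ (z a i = 0)).card : ℝ) = (A.card : ℝ) := by
        exact_mod_cast congrArg (Nat.cast : ℕ → ℝ) hsplit
      linarith
    rw [hzero_count, ← hexpand]
    exact hge
  -- Han's inequality
  have hinjS : ∀ a ∈ A, ∀ b ∈ A,
      (∀ j ∈ S, (fun (j b : G) => z b j) j a = (fun (j b : G) => z b j) j b) → a = b := by
    intro a ha b hb h
    rw [hz1 a ha, hz1 b hb]
    exact Finset.sum_congr rfl fun s hs => congrArg (fun t => t • s) (h s hs)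
  have hhan := han A (fun j b => z b j) S hinjS
  have hlog2 : (0:ℝ) < Real.log 2 := Real.log_pos one_lt_two
  -- combine
  have hmain : ∑ a ∈ A, (w a : ℝ) ≤ (1/2) * ((A.card : ℝ) * Real.logb 2 (A.card : ℝ)) := by
    have hw_nat : ∑ a ∈ A, w a = ∑ j ∈ S, (A.filter fun a => z a j ≠ 0).card := by
      calc ∑ a ∈ A, w a = ∑ a ∈ A, ∑ j ∈ S, (if z a j ≠ 0 then 1 else 0) := by
            refine Finset.sum_congr rfl fun a ha => ?_
            rw [hz3 a ha, Finset.card_filter]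
        _ = ∑ j ∈ S, ∑ a ∈ A, (if z a j ≠ 0 then 1 else 0) := Finset.sum_comm
        _ = ∑ j ∈ S, (A.filter fun a => z a j ≠ 0).card := by
            refine Finset.sum_congr rfl fun j _ => ?_
            rw [Finset.card_filter]
    have hw_sum : ∑ a ∈ A, (w a : ℝ) = ∑ j ∈ S, ((A.filter fun a => z a j ≠ 0).card : ℝ) := by
      rw [← Nat.cast_sum, hw_nat, Nat.cast_sum]
    rw [hw_sum]
    have h1 : ∑ j ∈ S, ((A.filter fun a => z a j ≠ 0).card : ℝ)
        ≤ ∑ j ∈ S, (1/2) * ∑ a ∈ A, Real.logb 2 (cJ A (fun j b => z b j) (S.erase j) a) := by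
      refine Finset.sum_le_sum fun j hj => ?_
      have := hstep2 j hj
      linarith
    refine le_trans h1 ?_
    rw [← Finset.mul_sum]
    have h2 : ∑ j ∈ S, ∑ a ∈ A, Real.logb 2 (cJ A (fun j b => z b j) (S.erase j) a)
        ≤ (A.card : ℝ) * Real.logb 2 (A.card : ℝ) := by
      have hconv : ∀ j ∈ S, ∑ a ∈ A, Real.logb 2 (cJ A (fun j b => z b j) (S.erase j) a)
          = (∑ a ∈ A, Real.log (cJ A (fun j b => z b j) (S.erase j) a)) / Real.log 2 := by
        intro j _
        rw [Finset.sum_div]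
        rfl
      calc ∑ j ∈ S, ∑ a ∈ A, Real.logb 2 (cJ A (fun j b => z b j) (S.erase j) a)
          = (∑ j ∈ S, ∑ a ∈ A, Real.log (cJ A (fun j b => z b j) (S.erase j) a))
            / Real.log 2 := by
            rw [Finset.sum_div]
            exact Finset.sum_congr rfl hconv
        _ ≤ ((A.card : ℝ) * Real.log (A.card : ℝ)) / Real.log 2 := by
            exact div_le_div_of_nonneg_right hhan hlog2.le
        _ = (A.card : ℝ) * Real.logb 2 (A.card : ℝ) := by
            rw [Real.logb]
            ring
    linarith
  have hN : (0:ℝ) < (A.card : ℝ) := by exact_mod_cast Finset.card_pos.mpr hA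
  rw [div_le_iff₀ hN]
  calc ∑ a ∈ A, (w a : ℝ) ≤ (1/2) * ((A.card : ℝ) * Real.logb 2 (A.card : ℝ)) := hmain
    _ = 1 / 2 * Real.logb 2 (A.card : ℝ) * (A.card : ℝ) := by ring
end
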